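/- arXiv:1807.01133 — 4 statements merged into one kernel-verified Lean document; each statement's English description precedes it below -/
import Mathlib

section
/- Let A be an m×m real matrix with nonnegative entries and let C_1, …, C_j be m×m real matrices such that |C_s| ≤ A entrywise for every s = 1, …, j. Then the spectral norm of the product C_1·C_2·⋯·C_j is bounded by the spectral norm of A^j, i.e., ‖C_1⋯C_j‖₂ ≤ ‖A^j‖₂. (In particular, the moving-average coefficient matrices B_{t,j} of the stationary NAR(p) solution satisfy ‖B_{t,j}‖₂ ≤ ‖|Ã|^j‖₂ for all t.) -/
noncomputable section
open MeasureTheory ProbabilityTheory Filter Matrix Topology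

instance matrixMeasurableSpace {m n α : Type*} [MeasurableSpace α] :
    MeasurableSpace (Matrix m n α) := inferInstanceAs (MeasurableSpace (m → n → α))

/-- Strict stationarity of a process indexed by `ℤ`: all finite-dimensional
distributions are shift invariant. -/
def StrictlyStationary {Ω α : Type*} [MeasurableSpace Ω] [MeasurableSpace α]
    (P : Measure Ω) (Z : ℤ → Ω → α) : Prop :=
  ∀ (k : ℤ) (n : ℕ) (t : Fin n → ℤ),
    P.map (fun ω i => Z (t i + k) ω) = P.map (fun ω i => Z (t i) ω)

/-- An i.i.d. process indexed by `ℤ`. -/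
def IID {Ω α : Type*} [MeasurableSpace Ω] [MeasurableSpace α]
    (P : Measure Ω) (Z : ℤ → Ω → α) : Prop :=
  (∀ t, Measurable (Z t)) ∧ iIndepFun Z P ∧
    ∀ t, P.map (Z t) = P.map (Z 0)

/-- For every `t`, the future innovations `{ε_s : s > t}` are independent of the
past of the network `{Ad_s : s ≤ t}`. -/
def FutureInnovIndep {Ω : Type*} [MeasurableSpace Ω] {d : ℕ}
    (P : Measure Ω) (ε : ℤ → Ω → (Fin d → ℝ))
    (Ad : ℤ → Ω → Matrix (Fin d) (Fin d) ℝ) : Prop :=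
  ∀ t : ℤ, IndepFun (fun ω (s : {s : ℤ // t < s}) => ε s ω)
      (fun ω (s : {s : ℤ // s ≤ t}) => Ad s ω) P

/-- entrywise absolute value `|B|` of a real matrix. -/
def entrywiseAbs {m n : Type*} (B : Matrix m n ℝ) : Matrix m n ℝ :=
  Matrix.of fun i j => |B i j|

/-- covariance of two real random variables. -/
def covR {Ω : Type*} [MeasurableSpace Ω] (P : Measure Ω) (U V : Ω → ℝ) : ℝ :=
  ∫ ω, U ω * V ω ∂P - (∫ ω, U ω ∂P) * (∫ ω, V ω ∂P)

/-- spectral norm (largest singular value) of a real square matrix. -/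
def sNorm {n : Type*} [Fintype n] [DecidableEq n] (B : Matrix n n ℝ) : ℝ :=
  ‖Matrix.toEuclideanCLM (𝕜 := ℝ) B‖

/-- ordered matrix product `M 1 * M 2 * ⋯ * M j` (empty product = identity). -/
def prodI {n : Type*} [Fintype n] [DecidableEq n] (M : ℕ → Matrix n n ℝ) :
    ℕ → Matrix n n ℝ
  | 0 => 1
  | j + 1 => prodI M j * M (j + 1)

/-- `Z n = O_P(1/√n)`: the sequence `√n · Z n` is bounded in probability. -/
def SqrtNBddInProb {Ω : Type*} [MeasurableSpace Ω] (P : Measure Ω)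
    (Z : ℕ → Ω → ℝ) : Prop :=
  ∀ δ : ℝ, 0 < δ → ∃ M : ℝ, ∀ᶠ n : ℕ in atTop,
    (P {ω | M < |Real.sqrt n * Z n ω|}).toReal ≤ δ

/-- the `(E,q)`-norm `(E|W|^q)^{1/q}` of a real random variable. -/
def Enorm {Ω : Type*} [MeasurableSpace Ω] (P : Measure Ω) (q : ℝ) (W : Ω → ℝ) : ℝ :=
  (∫ ω, |W ω| ^ q ∂P) ^ (1 / q)

/-- convergence in distribution of real random variables to a (possibly degenerate)
Gaussian with mean 0 and variance `v`. -/
def TendstoGaussian {Ω : Type*} [MeasurableSpace Ω] (P : Measure Ω)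
    (Z : ℕ → Ω → ℝ) (v : ℝ) : Prop :=
  ∀ f : BoundedContinuousFunction ℝ ℝ,
    Tendsto (fun n => ∫ ω, f (Z n ω) ∂P) atTop
      (𝓝 (∫ x, f x ∂(gaussianReal 0 v.toNNReal)))

/-- convergence in distribution of random vectors to a centered multivariate normal
with covariance matrix `C`, phrased via the Cramér–Wold device. -/
def TendstoGaussianVec {Ω κ : Type*} [MeasurableSpace Ω] [Fintype κ] (P : Measure Ω)
    (Z : ℕ → Ω → κ → ℝ) (C : Matrix κ κ ℝ) : Prop :=
  ∀ u : κ → ℝ, TendstoGaussian P (fun n ω => ∑ i, u i * Z n ω i)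
    (∑ i, ∑ j, u i * C i j * u j)

section Stacked

variable {d p : ℕ}

/-- dp×dp stacked (companion-type) matrix with first block row `B 0, …, B (p-1)`
and identity blocks on the subdiagonal. -/
def stacked (B : Fin p → Matrix (Fin d) (Fin d) ℝ) :
    Matrix (Fin p × Fin d) (Fin p × Fin d) ℝ :=
  Matrix.of fun i j =>
    if (i.1 : ℕ) = 0 then B j.1 i.2 j.2
    else if (i.1 : ℕ) = (j.1 : ℕ) + 1 ∧ i.2 = j.2 then (1 : ℝ) else 0

/-- top-left d×d block of a dp×dp matrix, i.e. `(e₁ ⊗ I_d)ᵀ C (e₁ ⊗ I_d)`. -/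
def blockTL [NeZero p] (C : Matrix (Fin p × Fin d) (Fin p × Fin d) ℝ) :
    Matrix (Fin d) (Fin d) ℝ :=
  Matrix.of fun i k => C (0, i) (0, k)

/-- the stacked matrix `G̃(Ãd_u)` built from the network process at time `u`. -/
def GtildeAt {Ω : Type*} (G : Fin p → Matrix (Fin d) (Fin d) ℝ → Matrix (Fin d) (Fin d) ℝ)
    (Ad : ℤ → Ω → Matrix (Fin d) (Fin d) ℝ) (u : ℤ) (ω : Ω) :
    Matrix (Fin p × Fin d) (Fin p × Fin d) ℝ :=
  stacked (fun j => G j (Ad (u - (j : ℕ)) ω))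

/-- the moving-average coefficient
`B_{t,j} = (e₁⊗I_d)ᵀ ∏_{s=1}^j (Ã ⊙ G̃(Ãd_{t−s})) (e₁⊗I_d)`. -/
def Bcoef {Ω : Type*} [NeZero p] (A : Fin p → Matrix (Fin d) (Fin d) ℝ)
    (G : Fin p → Matrix (Fin d) (Fin d) ℝ → Matrix (Fin d) (Fin d) ℝ)
    (Ad : ℤ → Ω → Matrix (Fin d) (Fin d) ℝ) (t : ℤ) (j : ℕ) (ω : Ω) :
    Matrix (Fin d) (Fin d) ℝ :=
  blockTL (prodI (fun s => ((stacked A).hadamard (GtildeAt G Ad (t - s) ω))) j)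

end Stacked

theorem sNorm_mono_of_abs_le {m : ℕ} (B B' : Matrix (Fin m) (Fin m) ℝ)
    (h : ∀ i l, |B i l| ≤ B' i l) : sNorm B ≤ sNorm B' := by
  have hB' : ∀ i l, 0 ≤ B' i l := fun i l => le_trans (abs_nonneg _) (h i l)
  unfold sNorm
  apply ContinuousLinearMap.opNorm_le_bound _ (norm_nonneg _)
  intro x
  set y : EuclideanSpace ℝ (Fin m) := (WithLp.equiv 2 _).symm (fun i => |x i|) with hy
  have hyi : ∀ i, y i = |x i| := fun i => rfl
  have hynorm : ‖y‖ = ‖x‖ := by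
    rw [EuclideanSpace.norm_eq, EuclideanSpace.norm_eq]
    congr 1
    exact Finset.sum_congr rfl fun i _ => by rw [hyi]; simp
  have h1 : ‖Matrix.toEuclideanCLM (𝕜 := ℝ) B x‖ ≤ ‖Matrix.toEuclideanCLM (𝕜 := ℝ) B' y‖ := by
    rw [EuclideanSpace.norm_eq, EuclideanSpace.norm_eq]
    apply Real.sqrt_le_sqrt
    apply Finset.sum_le_sum
    intro i _
    have e1 : (Matrix.toEuclideanCLM (𝕜 := ℝ) B x) i = ∑ l, B i l * x l := rfl
    have e2 : (Matrix.toEuclideanCLM (𝕜 := ℝ) B' y) i = ∑ l, B' i l * y l := rfl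
    rw [e1, e2]
    simp only [Real.norm_eq_abs]
    have hle : |∑ l, B i l * x l| ≤ ∑ l, B' i l * y l := by
      calc |∑ l, B i l * x l| ≤ ∑ l, |B i l * x l| := Finset.abs_sum_le_sum_abs _ _
        _ ≤ ∑ l, B' i l * y l := by
            apply Finset.sum_le_sum
            intro l _
            rw [abs_mul, hyi]
            exact mul_le_mul_of_nonneg_right (h i l) (abs_nonneg _)
    have hnn : 0 ≤ ∑ l, B' i l * y l := le_trans (abs_nonneg _) hle
    calc |∑ l, B i l * x l| ^ 2 ≤ (∑ l, B' i l * y l) ^ 2 := by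
          apply sq_le_sq' _ hle
          linarith [abs_nonneg (∑ l, B i l * x l)]
      _ ≤ |∑ l, B' i l * y l| ^ 2 := by rw [abs_of_nonneg hnn]
  calc ‖Matrix.toEuclideanCLM (𝕜 := ℝ) B x‖ ≤ ‖Matrix.toEuclideanCLM (𝕜 := ℝ) B' y‖ := h1
    _ ≤ ‖Matrix.toEuclideanCLM (𝕜 := ℝ) B'‖ * ‖y‖ := ContinuousLinearMap.le_opNorm _ _
    _ = ‖Matrix.toEuclideanCLM (𝕜 := ℝ) B'‖ * ‖x‖ := by rw [hynorm]

theorem abs_list_prod_le {m : ℕ} (A : Matrix (Fin m) (Fin m) ℝ)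
    (hA : ∀ i l, 0 ≤ A i l) :
    ∀ (L : List (Matrix (Fin m) (Fin m) ℝ)),
      (∀ M ∈ L, ∀ i l, |M i l| ≤ A i l) →
      ∀ i l, |L.prod i l| ≤ (A ^ L.length) i l := by
  intro L
  induction L with
  | nil =>
      intro _ i l
      simp [Matrix.one_apply]
      split <;> simp
  | cons c t ih =>
      intro hmem i l
      have hc : ∀ i l, |c i l| ≤ A i l := hmem c List.mem_cons_self
      have ht := ih (fun M hM => hmem M (List.mem_cons_of_mem _ hM))
      simp only [List.prod_cons, List.length_cons]
      have : (c * t.prod) i l = ∑ k, c i k * t.prod k l := rfl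
      rw [this, pow_succ']
      have : (A * A ^ t.length) i l = ∑ k, A i k * (A ^ t.length) k l := rfl
      rw [this]
      calc |∑ k, c i k * t.prod k l| ≤ ∑ k, |c i k * t.prod k l| :=
            Finset.abs_sum_le_sum_abs _ _
        _ ≤ ∑ k, A i k * (A ^ t.length) k l := by
            apply Finset.sum_le_sum
            intro k _
            rw [abs_mul]
            exact mul_le_mul (hc i k) (ht k l) (abs_nonneg _)
              (le_trans (abs_nonneg _) (hc i k))

/-- If `A` is a nonnegative m×m matrix and `C_1, …, C_j` satisfy
`|C_s| ≤ A` entrywise, then `‖C_1 ⋯ C_j‖₂ ≤ ‖A^j‖₂` (spectral norms). -/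
theorem stmt1 {m : ℕ} (A : Matrix (Fin m) (Fin m) ℝ)
    (hA : ∀ i l, 0 ≤ A i l)
    (j : ℕ) (C : Fin j → Matrix (Fin m) (Fin m) ℝ)
    (hC : ∀ s i l, |C s i l| ≤ A i l) :
    sNorm (List.ofFn C).prod ≤ sNorm (A ^ j) := by
  have habs : ∀ i l, |(List.ofFn C).prod i l| ≤ (A ^ (List.ofFn C).length) i l := by
    apply abs_list_prod_le A hA
    intro M hM i l
    obtain ⟨s, rfl⟩ := List.mem_ofFn.mp hM
    exact hC s i l
  rw [List.length_ofFn] at habs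
  exact sNorm_mono_of_abs_le _ _ habs
end
end

section
/- Let X_t = Ad_{t−1} ε_{t−1} + ε_t be a network moving average process of order 1, where the processes {Ad_t} and {ε_t} are mutually independent. Then for every lag h ≥ 2, the autocovariance function of X equals Γ_X(h) = Cov(Ad_{h−1}μ, Ad_{−1}μ) = E[(Ad_{h−1}μ)(Ad_{−1}μ)ᵀ] − (E(Ad_0)μ)(E(Ad_0)μ)ᵀ; in particular, Γ_X(h) for h ≥ 2 is determined entirely by the linear dependence structure of the network process Ad and vanishes whenever μ = 0. -/
noncomputable section
open MeasureTheory ProbabilityTheory Filter Matrix Topology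

/-- For the network moving average process of order 1,
`X_t = Ad_{t−1} ε_{t−1} + ε_t`, with `{Ad_t}` and `{ε_t}` mutually independent,
the autocovariance at every lag `h ≥ 2` is
`Γ_X(h) = Cov(Ad_{h−1}μ, Ad_{−1}μ)
        = E[(Ad_{h−1}μ)(Ad_{−1}μ)ᵀ] − (E(Ad_0)μ)(E(Ad_0)μ)ᵀ`,
and it vanishes whenever `μ = 0`. -/
theorem stmt3 {d : ℕ} (hd : 0 < d)
    {Ω : Type*} [MeasurableSpace Ω] (P : Measure Ω) [IsProbabilityMeasure P]
    (Ad : ℤ → Ω → Matrix (Fin d) (Fin d) ℝ)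
    (ε : ℤ → Ω → (Fin d → ℝ)) (μ : Fin d → ℝ)
    (X : ℤ → Ω → (Fin d → ℝ))
    -- the network process: measurable, `[−1,1]`-valued, strictly stationary
    (hAdmeas : ∀ t, Measurable (Ad t))
    (hAdval : ∀ t ω a b, Ad t ω a b ∈ Set.Icc (-1 : ℝ) 1)
    (hAdstat : StrictlyStationary P Ad)
    -- the innovations: i.i.d., mean `μ`, square integrable,
    -- positive definite covariance
    (hiid : IID P ε)
    (hmean : ∀ a, ∫ ω, ε 0 ω a ∂P = μ a)
    (hL2 : ∀ a, MemLp (fun ω => ε 0 ω a) 2 P)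
    (hPosDef : (Matrix.of fun a b =>
        covR P (fun ω => ε 0 ω a) (fun ω => ε 0 ω b)).PosDef)
    -- `{Ad_t}` and `{ε_t}` are mutually independent
    (hindep : IndepFun (fun ω (t : ℤ) => Ad t ω) (fun ω (t : ℤ) => ε t ω) P)
    -- the NMA(1) model
    (hX : ∀ t ω, X t ω = Ad (t - 1) ω *ᵥ ε (t - 1) ω + ε t ω) :
    ∀ h : ℕ, 2 ≤ h → ∀ a b : Fin d,
      (covR P (fun ω => X (h : ℤ) ω a) (fun ω => X 0 ω b) =
        covR P (fun ω => (Ad ((h : ℤ) - 1) ω *ᵥ μ) a)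
               (fun ω => (Ad (-1) ω *ᵥ μ) b)) ∧
      (covR P (fun ω => X (h : ℤ) ω a) (fun ω => X 0 ω b) =
        (∫ ω, (Ad ((h : ℤ) - 1) ω *ᵥ μ) a * (Ad (-1) ω *ᵥ μ) b ∂P) -
          ((Matrix.of fun i k => ∫ ω, Ad 0 ω i k ∂P) *ᵥ μ) a *
          ((Matrix.of fun i k => ∫ ω, Ad 0 ω i k ∂P) *ᵥ μ) b) ∧
      (μ = 0 → covR P (fun ω => X (h : ℤ) ω a) (fun ω => X 0 ω b) = 0) := by
    classical
  -- basic measurability facts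
  have hmeasAP : Measurable fun ω (t : ℤ) => Ad t ω :=
    measurable_pi_lambda _ fun t => hAdmeas t
  have hmeasEP : Measurable fun ω (t : ℤ) => ε t ω :=
    measurable_pi_lambda _ fun t => hiid.1 t
  have hGe : ∀ (u : ℤ) (c : Fin d), Measurable fun e : ℤ → Fin d → ℝ => e u c :=
    fun u c => (measurable_pi_apply c).comp (measurable_pi_apply u)
  have hFA : ∀ (s : ℤ) (c k : Fin d),
      Measurable fun A : ℤ → Matrix (Fin d) (Fin d) ℝ => A s c k :=
    fun s c k => (measurable_pi_apply k).comp
      ((measurable_pi_apply c).comp (measurable_pi_apply s))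
  have hme : ∀ (t : ℤ) (i : Fin d), Measurable fun ω => ε t ω i :=
    fun t i => (measurable_pi_apply i).comp (hiid.1 t)
  have hAbs : ∀ (t : ℤ) (ω : Ω) (c k : Fin d), |Ad t ω c k| ≤ 1 := fun t ω c k =>
    abs_le.2 ⟨(hAdval t ω c k).1, (hAdval t ω c k).2⟩
  -- mean and integrability of the innovations at every time
  have hmean_t : ∀ (t : ℤ) (i : Fin d), ∫ ω, ε t ω i ∂P = μ i := by
    intro t i
    have h1 : ∫ e : Fin d → ℝ, e i ∂(P.map (ε t)) = ∫ ω, ε t ω i ∂P :=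
      integral_map (hiid.1 t).aemeasurable (measurable_pi_apply i).aestronglyMeasurable
    have h2 : ∫ e : Fin d → ℝ, e i ∂(P.map (ε 0)) = ∫ ω, ε 0 ω i ∂P :=
      integral_map (hiid.1 0).aemeasurable (measurable_pi_apply i).aestronglyMeasurable
    rw [← h1, hiid.2.2 t, h2]
    exact hmean i
  have hInt_e : ∀ (t : ℤ) (i : Fin d), Integrable (fun ω => ε t ω i) P := by
    intro t i
    have h0 : Integrable ((fun e : Fin d → ℝ => e i) ∘ ε 0) P :=
      (hL2 i).integrable one_le_two
    rw [← integrable_map_measure (measurable_pi_apply i).aestronglyMeasurable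
        (hiid.1 0).aemeasurable, ← hiid.2.2 t,
      integrable_map_measure (measurable_pi_apply i).aestronglyMeasurable
        (hiid.1 t).aemeasurable] at h0
    exact h0
  have hInd_e : ∀ u v : ℤ, u ≠ v → ∀ i j : Fin d,
      IndepFun (fun ω => ε u ω i) (fun ω => ε v ω j) P := fun u v huv i j =>
    (hiid.2.1.indepFun huv).comp (measurable_pi_apply i) (measurable_pi_apply j)
  have hInt_ee : ∀ u v : ℤ, u ≠ v → ∀ i j : Fin d,
      Integrable (fun ω => ε u ω i * ε v ω j) P := fun u v huv i j =>
    (hInd_e u v huv i j).integrable_mul (hInt_e u i) (hInt_e v j)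
  have hmean_ee : ∀ u v : ℤ, u ≠ v → ∀ i j : Fin d,
      ∫ ω, ε u ω i * ε v ω j ∂P = μ i * μ j := by
    intro u v huv i j
    have H : ∫ ω, ε u ω i * ε v ω j ∂P
        = (∫ ω, ε u ω i ∂P) * ∫ ω, ε v ω j ∂P :=
      (hInd_e u v huv i j).integral_fun_mul_eq_mul_integral
        (hme u i).aestronglyMeasurable (hme v j).aestronglyMeasurable
    rw [H, hmean_t u i, hmean_t v j]
  -- master lemma: bounded functional of the network times an integrable
  -- functional of the innovations
  have master : ∀ (F : (ℤ → Matrix (Fin d) (Fin d) ℝ) → ℝ)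
      (G : (ℤ → (Fin d → ℝ)) → ℝ),
      Measurable F → Measurable G → (∀ ω, |F fun t => Ad t ω| ≤ 1) →
      Integrable (fun ω => G fun t => ε t ω) P →
      Integrable (fun ω => (F fun t => Ad t ω) * (G fun t => ε t ω)) P ∧
      ∫ ω, (F fun t => Ad t ω) * (G fun t => ε t ω) ∂P =
        (∫ ω, (F fun t => Ad t ω) ∂P) * ∫ ω, (G fun t => ε t ω) ∂P := by
    intro F G hF hG hFb hGint
    have hind : IndepFun (fun ω => F fun t => Ad t ω) (fun ω => G fun t => ε t ω) P :=
      hindep.comp hF hG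
    have hFm : Measurable fun ω => F fun t => Ad t ω := hF.comp hmeasAP
    have hGm : Measurable fun ω => G fun t => ε t ω := hG.comp hmeasEP
    exact ⟨hGint.bdd_mul hFm.aestronglyMeasurable
        (c := 1) (Filter.Eventually.of_forall fun ω => by simpa using hFb ω),
      hind.integral_fun_mul_eq_mul_integral hFm.aestronglyMeasurable hGm.aestronglyMeasurable⟩
  -- specializations of the master lemma
  have keyA1 : ∀ (s u : ℤ) (c k i : Fin d),
      Integrable (fun ω => Ad s ω c k * ε u ω i) P ∧
      ∫ ω, Ad s ω c k * ε u ω i ∂P = (∫ ω, Ad s ω c k ∂P) * μ i := by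
    intro s u c k i
    have H := master (fun A => A s c k) (fun e => e u i) (hFA s c k) (hGe u i)
      (fun ω => hAbs s ω c k) (hInt_e u i)
    refine ⟨H.1, ?_⟩
    have H2 : ∫ ω, Ad s ω c k * ε u ω i ∂P
        = (∫ ω, Ad s ω c k ∂P) * ∫ ω, ε u ω i ∂P := H.2
    rw [H2, hmean_t u i]
  have keyA2 : ∀ (s u v : ℤ), u ≠ v → ∀ (c k i j : Fin d),
      Integrable (fun ω => Ad s ω c k * (ε u ω i * ε v ω j)) P ∧
      ∫ ω, Ad s ω c k * (ε u ω i * ε v ω j) ∂P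
        = (∫ ω, Ad s ω c k ∂P) * (μ i * μ j) := by
    intro s u v huv c k i j
    have H := master (fun A => A s c k) (fun e => e u i * e v j) (hFA s c k)
      ((hGe u i).mul (hGe v j)) (fun ω => hAbs s ω c k) (hInt_ee u v huv i j)
    refine ⟨H.1, ?_⟩
    have H2 : ∫ ω, Ad s ω c k * (ε u ω i * ε v ω j) ∂P
        = (∫ ω, Ad s ω c k ∂P) * ∫ ω, ε u ω i * ε v ω j ∂P := H.2
    rw [H2, hmean_ee u v huv i j]
  have keyAA : ∀ (s t u v : ℤ), u ≠ v → ∀ (c k c' k' i j : Fin d),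
      Integrable (fun ω => Ad s ω c k * Ad t ω c' k' * (ε u ω i * ε v ω j)) P ∧
      ∫ ω, Ad s ω c k * Ad t ω c' k' * (ε u ω i * ε v ω j) ∂P
        = (∫ ω, Ad s ω c k * Ad t ω c' k' ∂P) * (μ i * μ j) := by
    intro s t u v huv c k c' k' i j
    have H := master (fun A => A s c k * A t c' k') (fun e => e u i * e v j)
      ((hFA s c k).mul (hFA t c' k')) ((hGe u i).mul (hGe v j))
      (fun ω => by
        show |Ad s ω c k * Ad t ω c' k'| ≤ 1
        rw [abs_mul]
        nlinarith [hAbs s ω c k, hAbs t ω c' k',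
          abs_nonneg (Ad s ω c k), abs_nonneg (Ad t ω c' k')])
      (hInt_ee u v huv i j)
    refine ⟨H.1, ?_⟩
    have H2 : ∫ ω, Ad s ω c k * Ad t ω c' k' * (ε u ω i * ε v ω j) ∂P
        = (∫ ω, Ad s ω c k * Ad t ω c' k' ∂P) * ∫ ω, ε u ω i * ε v ω j ∂P := H.2
    rw [H2, hmean_ee u v huv i j]
  -- integrability of network entries and their products
  have hInt_A : ∀ (s : ℤ) (c k : Fin d), Integrable (fun ω => Ad s ω c k) P := by
    intro s c k
    have H := ((integrable_const (1 : ℝ) : Integrable _ P)).bdd_mul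
      ((hFA s c k).comp hmeasAP).aestronglyMeasurable
      (c := 1) (Filter.Eventually.of_forall fun ω => by simpa using hAbs s ω c k)
    simpa using H
  have hInt_AA : ∀ (s t : ℤ) (c k c' k' : Fin d),
      Integrable (fun ω => Ad s ω c k * Ad t ω c' k') P := by
    intro s t c k c' k'
    have H := ((integrable_const (1 : ℝ) : Integrable _ P)).bdd_mul
      (((hFA s c k).comp hmeasAP).mul ((hFA t c' k').comp hmeasAP)).aestronglyMeasurable
      (c := 1) (Filter.Eventually.of_forall fun ω => by
        show ‖Ad s ω c k * Ad t ω c' k'‖ ≤ 1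
        rw [Real.norm_eq_abs, abs_mul]
        nlinarith [hAbs s ω c k, hAbs t ω c' k',
          abs_nonneg (Ad s ω c k), abs_nonneg (Ad t ω c' k')])
    simpa using H
  -- stationarity of the first moments of the network
  have statmean : ∀ (s : ℤ) (c k : Fin d),
      ∫ ω, Ad s ω c k ∂P = ∫ ω, Ad 0 ω c k ∂P := by
    intro s c k
    have hg : Measurable fun v : Fin 1 → Matrix (Fin d) (Fin d) ℝ => v 0 c k :=
      (measurable_pi_apply k).comp
        ((measurable_pi_apply c).comp (measurable_pi_apply 0))
    have hml : Measurable fun ω (i : Fin 1) => Ad ((fun _ : Fin 1 => (0:ℤ)) i + s) ω :=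
      measurable_pi_lambda _ fun _ => hAdmeas _
    have hmr : Measurable fun ω (i : Fin 1) => Ad ((fun _ : Fin 1 => (0:ℤ)) i) ω :=
      measurable_pi_lambda _ fun _ => hAdmeas _
    have key : ∫ ω, Ad (0 + s) ω c k ∂P = ∫ ω, Ad 0 ω c k ∂P := by
      have h1' : ∫ v : Fin 1 → Matrix (Fin d) (Fin d) ℝ, v 0 c k
          ∂(P.map fun ω (i : Fin 1) => Ad ((fun _ : Fin 1 => (0:ℤ)) i + s) ω)
          = ∫ ω, Ad (0 + s) ω c k ∂P :=
        integral_map hml.aemeasurable hg.aestronglyMeasurable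
      have h2' : ∫ v : Fin 1 → Matrix (Fin d) (Fin d) ℝ, v 0 c k
          ∂(P.map fun ω (i : Fin 1) => Ad ((fun _ : Fin 1 => (0:ℤ)) i) ω)
          = ∫ ω, Ad 0 ω c k ∂P :=
        integral_map hmr.aemeasurable hg.aestronglyMeasurable
      rw [← h1', ← h2']
      congr 1
      exact hAdstat s 1 fun _ => (0:ℤ)
    simpa using key
  -- expansion of matrix-vector products
  have hmv : ∀ (M : Matrix (Fin d) (Fin d) ℝ) (v : Fin d → ℝ) (c : Fin d),
      (M *ᵥ v) c = ∑ i, M c i * v i := fun M v c => rfl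
  -- now the main computation
  intro h hh a b
  have hh' : (2:ℤ) ≤ (h:ℤ) := by exact_mod_cast hh
  have d1 : (h:ℤ) - 1 ≠ -1 := by omega
  have d2 : (h:ℤ) - 1 ≠ 0 := by omega
  have d3 : (h:ℤ) ≠ -1 := by omega
  have d4 : (h:ℤ) ≠ 0 := by omega
  have hXh : ∀ ω, X (h:ℤ) ω a
      = (Ad ((h:ℤ)-1) ω *ᵥ ε ((h:ℤ)-1) ω) a + ε (h:ℤ) ω a := by
    intro ω; rw [hX]; rfl
  have hX0 : ∀ ω, X 0 ω b = (Ad (-1) ω *ᵥ ε (-1) ω) b + ε 0 ω b := by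
    intro ω; rw [hX]; norm_num
  have hm1sum : ∫ ω, (Ad ((h:ℤ)-1) ω *ᵥ μ) a ∂P
      = ∑ i, (∫ ω, Ad ((h:ℤ)-1) ω a i ∂P) * μ i := by
    simp only [hmv]
    rw [integral_finset_sum _ fun i _ => (hInt_A _ a i).mul_const (μ i)]
    exact Finset.sum_congr rfl fun i _ => integral_mul_const _ _
  have hm0sum : ∫ ω, (Ad (-1) ω *ᵥ μ) b ∂P
      = ∑ j, (∫ ω, Ad (-1) ω b j ∂P) * μ j := by
    simp only [hmv]
    rw [integral_finset_sum _ fun j _ => (hInt_A _ b j).mul_const (μ j)]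
    exact Finset.sum_congr rfl fun j _ => integral_mul_const _ _
  -- means of the moving-average parts
  have hIU1 : Integrable (fun ω => (Ad ((h:ℤ)-1) ω *ᵥ ε ((h:ℤ)-1) ω) a) P := by
    simp only [hmv]
    exact integrable_finset_sum _ fun i _ => (keyA1 ((h:ℤ)-1) ((h:ℤ)-1) a i i).1
  have hEU1 : ∫ ω, (Ad ((h:ℤ)-1) ω *ᵥ ε ((h:ℤ)-1) ω) a ∂P
      = ∫ ω, (Ad ((h:ℤ)-1) ω *ᵥ μ) a ∂P := by
    simp only [hmv]
    rw [integral_finset_sum _ fun i _ => (keyA1 ((h:ℤ)-1) ((h:ℤ)-1) a i i).1,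
      integral_finset_sum _ fun i _ => (hInt_A _ a i).mul_const (μ i)]
    refine Finset.sum_congr rfl fun i _ => ?_
    rw [(keyA1 ((h:ℤ)-1) ((h:ℤ)-1) a i i).2, integral_mul_const]
  have hIV1 : Integrable (fun ω => (Ad (-1) ω *ᵥ ε (-1) ω) b) P := by
    simp only [hmv]
    exact integrable_finset_sum _ fun j _ => (keyA1 (-1) (-1) b j j).1
  have hEV1 : ∫ ω, (Ad (-1) ω *ᵥ ε (-1) ω) b ∂P
      = ∫ ω, (Ad (-1) ω *ᵥ μ) b ∂P := by
    simp only [hmv]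
    rw [integral_finset_sum _ fun j _ => (keyA1 (-1) (-1) b j j).1,
      integral_finset_sum _ fun j _ => (hInt_A _ b j).mul_const (μ j)]
    refine Finset.sum_congr rfl fun j _ => ?_
    rw [(keyA1 (-1) (-1) b j j).2, integral_mul_const]
  -- the four product terms
  have hfun1 : (fun ω => (Ad ((h:ℤ)-1) ω *ᵥ ε ((h:ℤ)-1) ω) a
        * (Ad (-1) ω *ᵥ ε (-1) ω) b)
      = fun ω => ∑ i, ∑ j, Ad ((h:ℤ)-1) ω a i * Ad (-1) ω b j
          * (ε ((h:ℤ)-1) ω i * ε (-1) ω j) := by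
    funext ω
    simp only [hmv, Finset.sum_mul_sum]
    exact Finset.sum_congr rfl fun i _ => Finset.sum_congr rfl fun j _ => by ring
  have hIT1 : Integrable (fun ω => (Ad ((h:ℤ)-1) ω *ᵥ ε ((h:ℤ)-1) ω) a
      * (Ad (-1) ω *ᵥ ε (-1) ω) b) P := by
    rw [hfun1]
    exact integrable_finset_sum _ fun i _ => integrable_finset_sum _ fun j _ =>
      (keyAA ((h:ℤ)-1) (-1) ((h:ℤ)-1) (-1) d1 a i b j i j).1
  have hET1 : ∫ ω, (Ad ((h:ℤ)-1) ω *ᵥ ε ((h:ℤ)-1) ω) a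
        * (Ad (-1) ω *ᵥ ε (-1) ω) b ∂P
      = ∫ ω, (Ad ((h:ℤ)-1) ω *ᵥ μ) a * (Ad (-1) ω *ᵥ μ) b ∂P := by
    have hfunq : (fun ω => (Ad ((h:ℤ)-1) ω *ᵥ μ) a * (Ad (-1) ω *ᵥ μ) b)
        = fun ω => ∑ i, ∑ j, Ad ((h:ℤ)-1) ω a i * Ad (-1) ω b j * (μ i * μ j) := by
      funext ω
      simp only [hmv, Finset.sum_mul_sum]
      exact Finset.sum_congr rfl fun i _ => Finset.sum_congr rfl fun j _ => by ring
    rw [hfun1, hfunq,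
      integral_finset_sum _ fun i _ => integrable_finset_sum _ fun j _ =>
        (keyAA ((h:ℤ)-1) (-1) ((h:ℤ)-1) (-1) d1 a i b j i j).1,
      integral_finset_sum _ fun i _ => integrable_finset_sum _ fun j _ =>
        (hInt_AA ((h:ℤ)-1) (-1) a i b j).mul_const _]
    refine Finset.sum_congr rfl fun i _ => ?_
    rw [integral_finset_sum _ fun j _ =>
        (keyAA ((h:ℤ)-1) (-1) ((h:ℤ)-1) (-1) d1 a i b j i j).1,
      integral_finset_sum _ fun j _ => (hInt_AA ((h:ℤ)-1) (-1) a i b j).mul_const _]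
    refine Finset.sum_congr rfl fun j _ => ?_
    rw [(keyAA ((h:ℤ)-1) (-1) ((h:ℤ)-1) (-1) d1 a i b j i j).2, integral_mul_const]
  have hfun2 : (fun ω => (Ad ((h:ℤ)-1) ω *ᵥ ε ((h:ℤ)-1) ω) a * ε 0 ω b)
      = fun ω => ∑ i, Ad ((h:ℤ)-1) ω a i * (ε ((h:ℤ)-1) ω i * ε 0 ω b) := by
    funext ω
    simp only [hmv, Finset.sum_mul]
    exact Finset.sum_congr rfl fun i _ => by ring
  have hIT2 : Integrable (fun ω => (Ad ((h:ℤ)-1) ω *ᵥ ε ((h:ℤ)-1) ω) a * ε 0 ω b) P := by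
    rw [hfun2]
    exact integrable_finset_sum _ fun i _ => (keyA2 ((h:ℤ)-1) ((h:ℤ)-1) 0 d2 a i i b).1
  have hET2 : ∫ ω, (Ad ((h:ℤ)-1) ω *ᵥ ε ((h:ℤ)-1) ω) a * ε 0 ω b ∂P
      = (∫ ω, (Ad ((h:ℤ)-1) ω *ᵥ μ) a ∂P) * μ b := by
    rw [hfun2, integral_finset_sum _ fun i _ =>
      (keyA2 ((h:ℤ)-1) ((h:ℤ)-1) 0 d2 a i i b).1, hm1sum, Finset.sum_mul]
    refine Finset.sum_congr rfl fun i _ => ?_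
    rw [(keyA2 ((h:ℤ)-1) ((h:ℤ)-1) 0 d2 a i i b).2]
    ring
  have hfun3 : (fun ω => ε (h:ℤ) ω a * (Ad (-1) ω *ᵥ ε (-1) ω) b)
      = fun ω => ∑ j, Ad (-1) ω b j * (ε (h:ℤ) ω a * ε (-1) ω j) := by
    funext ω
    simp only [hmv, Finset.mul_sum]
    exact Finset.sum_congr rfl fun j _ => by ring
  have hIT3 : Integrable (fun ω => ε (h:ℤ) ω a * (Ad (-1) ω *ᵥ ε (-1) ω) b) P := by
    rw [hfun3]
    exact integrable_finset_sum _ fun j _ => (keyA2 (-1) (h:ℤ) (-1) d3 b j a j).1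
  have hET3 : ∫ ω, ε (h:ℤ) ω a * (Ad (-1) ω *ᵥ ε (-1) ω) b ∂P
      = μ a * ∫ ω, (Ad (-1) ω *ᵥ μ) b ∂P := by
    rw [hfun3, integral_finset_sum _ fun j _ => (keyA2 (-1) (h:ℤ) (-1) d3 b j a j).1,
      hm0sum, Finset.mul_sum]
    refine Finset.sum_congr rfl fun j _ => ?_
    rw [(keyA2 (-1) (h:ℤ) (-1) d3 b j a j).2]
    ring
  -- the covariance identity
  have hcov : covR P (fun ω => X (h:ℤ) ω a) (fun ω => X 0 ω b)
      = (∫ ω, (Ad ((h:ℤ)-1) ω *ᵥ μ) a * (Ad (-1) ω *ᵥ μ) b ∂P)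
        - (∫ ω, (Ad ((h:ℤ)-1) ω *ᵥ μ) a ∂P) * ∫ ω, (Ad (-1) ω *ᵥ μ) b ∂P := by
    have hfun : (fun ω => X (h:ℤ) ω a * X 0 ω b) = fun ω =>
        ((Ad ((h:ℤ)-1) ω *ᵥ ε ((h:ℤ)-1) ω) a * (Ad (-1) ω *ᵥ ε (-1) ω) b
          + (Ad ((h:ℤ)-1) ω *ᵥ ε ((h:ℤ)-1) ω) a * ε 0 ω b)
        + (ε (h:ℤ) ω a * (Ad (-1) ω *ᵥ ε (-1) ω) b + ε (h:ℤ) ω a * ε 0 ω b) := by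
      funext ω; rw [hXh ω, hX0 ω]; ring
    have hIT12 : Integrable (fun ω =>
        (Ad ((h:ℤ)-1) ω *ᵥ ε ((h:ℤ)-1) ω) a * (Ad (-1) ω *ᵥ ε (-1) ω) b
          + (Ad ((h:ℤ)-1) ω *ᵥ ε ((h:ℤ)-1) ω) a * ε 0 ω b) P := hIT1.add hIT2
    have hIT34 : Integrable (fun ω =>
        ε (h:ℤ) ω a * (Ad (-1) ω *ᵥ ε (-1) ω) b + ε (h:ℤ) ω a * ε 0 ω b) P :=
      hIT3.add (hInt_ee _ _ d4 a b)
    have hIU : Integrable (fun ω =>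
        (Ad ((h:ℤ)-1) ω *ᵥ ε ((h:ℤ)-1) ω) a + ε (h:ℤ) ω a) P := hIU1.add (hInt_e _ a)
    have hIV : Integrable (fun ω =>
        (Ad (-1) ω *ᵥ ε (-1) ω) b + ε 0 ω b) P := hIV1.add (hInt_e _ b)
    simp only [covR]
    rw [hfun, integral_add hIT12 hIT34,
      integral_add hIT1 hIT2, integral_add hIT3 (hInt_ee _ _ d4 a b),
      hET1, hET2, hET3, hmean_ee _ _ d4 a b,
      show (fun ω => X (h:ℤ) ω a)
        = fun ω => (Ad ((h:ℤ)-1) ω *ᵥ ε ((h:ℤ)-1) ω) a + ε (h:ℤ) ω a from funext hXh,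
      show (fun ω => X 0 ω b)
        = fun ω => (Ad (-1) ω *ᵥ ε (-1) ω) b + ε 0 ω b from funext hX0,
      integral_add hIU1 (hInt_e _ a), integral_add hIV1 (hInt_e _ b),
      hEU1, hEV1, hmean_t (h:ℤ) a, hmean_t 0 b]
    ring
  have hm1' : (∫ ω, (Ad ((h:ℤ)-1) ω *ᵥ μ) a ∂P)
      = ((Matrix.of fun i k => ∫ ω, Ad 0 ω i k ∂P) *ᵥ μ) a := by
    rw [hm1sum, hmv]
    refine Finset.sum_congr rfl fun i _ => ?_
    rw [Matrix.of_apply, statmean ((h:ℤ)-1) a i]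
  have hm0' : (∫ ω, (Ad (-1) ω *ᵥ μ) b ∂P)
      = ((Matrix.of fun i k => ∫ ω, Ad 0 ω i k ∂P) *ᵥ μ) b := by
    rw [hm0sum, hmv]
    refine Finset.sum_congr rfl fun j _ => ?_
    rw [Matrix.of_apply, statmean (-1) b j]
  refine ⟨?_, ?_, ?_⟩
  · rw [hcov]
    simp only [covR]
  · rw [hcov, hm1', hm0']
  · intro hμ
    subst hμ
    rw [hcov]
    simp [Matrix.mulVec_zero]
end
end

section
/- Under Assumption 2, the least squares estimators for each component r = 1, …, d are √n-consistent: μ̂_r = μ_r + O_P(1/√n) and ŵ_r = w_r + O_P(1/√n), i.e., the sequences √n(μ̂_r − μ_r) and √n(ŵ_r − w_r) are bounded in probability as n → ∞ (d and p fixed). -/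
noncomputable section
open MeasureTheory ProbabilityTheory Filter Matrix Topology

/-- the regressor vector `Y_s^{(r)}`: entry `(j,i)` equals
`(e_rᵀ G_{j+1}(Ad_{s−j})) e_i · X_{s−j;i}` (lag `j+1`). -/
def Yreg {d p : ℕ} {Ω : Type*}
    (G : Fin p → Matrix (Fin d) (Fin d) ℝ → Matrix (Fin d) (Fin d) ℝ)
    (Ad : ℤ → Ω → Matrix (Fin d) (Fin d) ℝ) (X : ℤ → Ω → (Fin d → ℝ))
    (r : Fin d) (s : ℤ) (ji : Fin p × Fin d) (ω : Ω) : ℝ :=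
  G ji.1 (Ad (s - (ji.1 : ℕ)) ω) r ji.2 * X (s - (ji.1 : ℕ)) ω ji.2

open MeasureTheory ProbabilityTheory Filter Matrix Topology

namespace SqrtAux

variable {Ω : Type*} [MeasurableSpace Ω] {P : MeasureTheory.Measure Ω}
  [MeasureTheory.IsProbabilityMeasure P]

theorem of_le {Z W : ℕ → Ω → ℝ} {c : ℝ} (hZ : SqrtNBddInProb P Z)
    (h : ∀ᶠ n : ℕ in atTop, ∀ ω, |W n ω| ≤ c * |Z n ω|) : SqrtNBddInProb P W := by
  intro δ hδ
  obtain ⟨M, hM⟩ := hZ δ hδ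
  refine ⟨(|c| + 1) * max M 0, ?_⟩
  filter_upwards [hM, h] with n hMn hn
  refine le_trans (ENNReal.toReal_mono (measure_ne_top _ _) (measure_mono ?_)) hMn
  intro ω hω
  simp only [Set.mem_setOf_eq] at hω ⊢
  have h1 : |W n ω| ≤ (|c| + 1) * |Z n ω| := by
    refine (hn ω).trans (mul_le_mul_of_nonneg_right ?_ (abs_nonneg _))
    linarith [le_abs_self c]
  have h2 : |Real.sqrt n * W n ω| ≤ (|c| + 1) * |Real.sqrt n * Z n ω| := by
    rw [abs_mul, abs_mul, mul_left_comm]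
    exact mul_le_mul_of_nonneg_left h1 (abs_nonneg _)
  have hc : (0:ℝ) < |c| + 1 := by positivity
  nlinarith [le_max_left M (0:ℝ), le_max_right M (0:ℝ), abs_nonneg (Real.sqrt n * Z n ω)]

theorem congr' {Z W : ℕ → Ω → ℝ} (hZ : SqrtNBddInProb P Z)
    (h : ∀ᶠ n : ℕ in atTop, ∀ ω, W n ω = Z n ω) : SqrtNBddInProb P W :=
  of_le (c := 1) hZ (by filter_upwards [h] with n hn ω; rw [hn ω, one_mul])

theorem add {Z W : ℕ → Ω → ℝ} (hZ : SqrtNBddInProb P Z) (hW : SqrtNBddInProb P W) :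
    SqrtNBddInProb P (fun n ω => Z n ω + W n ω) := by
  intro δ hδ
  obtain ⟨M1, hM1⟩ := hZ (δ/2) (by linarith)
  obtain ⟨M2, hM2⟩ := hW (δ/2) (by linarith)
  refine ⟨max M1 0 + max M2 0, ?_⟩
  filter_upwards [hM1, hM2] with n h1 h2
  have hsub : {ω | max M1 0 + max M2 0 < |Real.sqrt n * (Z n ω + W n ω)|} ⊆
      {ω | M1 < |Real.sqrt n * Z n ω|} ∪ {ω | M2 < |Real.sqrt n * W n ω|} := by
    intro ω hω
    simp only [Set.mem_setOf_eq, Set.mem_union] at hω ⊢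
    by_contra hcon
    push_neg at hcon
    obtain ⟨c1, c2⟩ := hcon
    have : |Real.sqrt n * (Z n ω + W n ω)| ≤ max M1 0 + max M2 0 := by
      rw [mul_add]
      refine (abs_add_le _ _).trans ?_
      gcongr <;> [exact c1.trans (le_max_left _ _); exact c2.trans (le_max_left _ _)]
    exact absurd this (not_le.2 hω)
  calc (P _).toReal ≤ (P ({ω | M1 < |Real.sqrt n * Z n ω|} ∪
        {ω | M2 < |Real.sqrt n * W n ω|})).toReal :=
        ENNReal.toReal_mono (measure_ne_top _ _) (measure_mono hsub)
    _ ≤ (P {ω | M1 < |Real.sqrt n * Z n ω|}).toReal +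
        (P {ω | M2 < |Real.sqrt n * W n ω|}).toReal := by
        rw [← ENNReal.toReal_add (measure_ne_top _ _) (measure_ne_top _ _)]
        exact ENNReal.toReal_mono (by simp [measure_ne_top]) (measure_union_le _ _)
    _ ≤ δ := by linarith

theorem shift {Z : ℕ → Ω → ℝ} (hZ : SqrtNBddInProb P Z) :
    SqrtNBddInProb P (fun n ω => Z (n - 1) ω) := by
  intro δ hδ
  obtain ⟨M, hM⟩ := hZ δ hδ
  refine ⟨2 * max M 0, ?_⟩
  have htend : Tendsto (fun n : ℕ => n - 1) atTop atTop :=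
    tendsto_sub_atTop_nat 1
  filter_upwards [htend.eventually hM, eventually_ge_atTop 2] with n hn h2
  refine le_trans (ENNReal.toReal_mono (measure_ne_top _ _) (measure_mono ?_)) hn
  intro ω hω
  simp only [Set.mem_setOf_eq] at hω ⊢
  have hs : Real.sqrt n ≤ 2 * Real.sqrt (n - 1 : ℕ) := by
    have h4 : (n : ℝ) ≤ 4 * ((n : ℝ) - 1) := by
      have : (2:ℝ) ≤ n := by exact_mod_cast h2
      linarith
    have hcast : ((n - 1 : ℕ) : ℝ) = (n : ℝ) - 1 := by
      have : (1:ℕ) ≤ n := by omega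
      push_cast [this]; ring
    calc Real.sqrt n ≤ Real.sqrt (4 * ((n:ℝ) - 1)) := Real.sqrt_le_sqrt h4
      _ = 2 * Real.sqrt ((n:ℝ) - 1) := by
          rw [show (4 : ℝ) * ((n:ℝ)-1) = (2:ℝ)^2 * ((n:ℝ)-1) by ring,
            Real.sqrt_mul (by positivity), Real.sqrt_sq (by norm_num)]
      _ = 2 * Real.sqrt ((n - 1 : ℕ) : ℝ) := by rw [hcast]
  have : 2 * max M 0 < 2 * (Real.sqrt (n-1:ℕ) * |Z (n-1) ω|) := by
    calc 2 * max M 0 < |Real.sqrt n * Z (n-1) ω| := hω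
      _ = Real.sqrt n * |Z (n-1) ω| := by
          rw [abs_mul, abs_of_nonneg (Real.sqrt_nonneg _)]
      _ ≤ 2 * Real.sqrt (n-1:ℕ) * |Z (n-1) ω| := by
          exact mul_le_mul_of_nonneg_right hs (abs_nonneg _)
      _ = 2 * (Real.sqrt (n-1:ℕ) * |Z (n-1) ω|) := by ring
  have h3 : max M 0 < Real.sqrt (n-1:ℕ) * |Z (n-1) ω| := by linarith
  calc M ≤ max M 0 := le_max_left _ _
    _ < Real.sqrt (n-1:ℕ) * |Z (n-1) ω| := h3
    _ = |Real.sqrt (n-1:ℕ) * Z (n-1) ω| := by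
        rw [abs_mul, abs_of_nonneg (Real.sqrt_nonneg _)]

theorem div_n {C : Ω → ℝ} (hC : Measurable C) :
    SqrtNBddInProb P (fun n ω => C ω / n) := by
  intro δ hδ
  have hmeas : ∀ k : ℕ, MeasurableSet {ω | (k:ℝ) < |C ω|} :=
    fun k => measurableSet_lt measurable_const hC.abs
  have hanti : Antitone (fun k : ℕ => {ω | (k:ℝ) < |C ω|}) := by
    intro a b hab ω hω
    simp only [Set.mem_setOf_eq] at hω ⊢
    exact lt_of_le_of_lt (by exact_mod_cast hab) hω
  have hempty : ⋂ k : ℕ, {ω | (k:ℝ) < |C ω|} = ∅ := by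
    ext ω
    simp only [Set.mem_iInter, Set.mem_setOf_eq, Set.mem_empty_iff_false, iff_false, not_forall,
      not_lt]
    obtain ⟨k, hk⟩ := exists_nat_gt |C ω|
    exact ⟨k, hk.le⟩
  have htend := MeasureTheory.tendsto_measure_iInter_atTop (μ := P)
    (fun k => (hmeas k).nullMeasurableSet) hanti ⟨0, measure_ne_top _ _⟩
  rw [hempty] at htend
  simp only [measure_empty] at htend
  have hev : ∀ᶠ k : ℕ in atTop, P {ω | (k:ℝ) < |C ω|} < ENNReal.ofReal δ := by
    refine htend.eventually_lt_const ?_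
    simp [ENNReal.ofReal_pos, hδ]
  obtain ⟨k, hk⟩ := hev.exists
  refine ⟨k, ?_⟩
  filter_upwards [eventually_ge_atTop 1] with n hn
  have hsub : {ω | (k:ℝ) < |Real.sqrt n * (C ω / n)|} ⊆ {ω | (k:ℝ) < |C ω|} := by
    intro ω hω
    simp only [Set.mem_setOf_eq] at hω ⊢
    have hn1 : (1:ℝ) ≤ n := by exact_mod_cast hn
    have hsl : Real.sqrt n ≤ n := by
      calc Real.sqrt n ≤ Real.sqrt ((n:ℝ)^2) := Real.sqrt_le_sqrt (by nlinarith)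
        _ = n := Real.sqrt_sq (by linarith)
    have : |Real.sqrt n * (C ω / n)| ≤ |C ω| := by
      rw [abs_mul, abs_div, abs_of_nonneg (Real.sqrt_nonneg _),
        abs_of_nonneg (by linarith : (0:ℝ) ≤ (n:ℝ))]
      rw [mul_div_assoc']
      rw [div_le_iff₀ (by linarith)]
      calc Real.sqrt n * |C ω| ≤ (n:ℝ) * |C ω| :=
            mul_le_mul_of_nonneg_right hsl (abs_nonneg _)
        _ = |C ω| * n := by ring
    linarith
  refine le_trans (ENNReal.toReal_mono (measure_ne_top _ _) (measure_mono hsub)) ?_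
  rw [← ENNReal.toReal_ofReal hδ.le]
  exact ENNReal.toReal_mono (by simp) hk.le

theorem neg {Z : ℕ → Ω → ℝ} (hZ : SqrtNBddInProb P Z) :
    SqrtNBddInProb P (fun n ω => - Z n ω) :=
  of_le (c := 1) hZ (by filter_upwards with n ω; rw [abs_neg, one_mul])

end SqrtAux
namespace SqrtAux

theorem abs_sub_le' (x y : ℝ) : |x - y| ≤ |x| + |y| := by
  rw [sub_eq_add_neg]
  exact (abs_add_le _ _).trans (by rw [abs_neg])

theorem solve {Ω : Type*} [MeasurableSpace Ω] {P : MeasureTheory.Measure Ω}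
    [MeasureTheory.IsProbabilityMeasure P]
    {κ : Type*} [Fintype κ] [DecidableEq κ]
    (M : Matrix κ κ ℝ) (hM : IsUnit M)
    (Rm : ℕ → Ω → Matrix κ κ ℝ) (bv θv : ℕ → Ω → κ → ℝ)
    (hfoc : ∀ n ω, (M + Rm n ω) *ᵥ θv n ω = bv n ω)
    (hR : ∀ i j, SqrtNBddInProb P (fun n ω => Rm n ω i j))
    (hb : ∀ i, SqrtNBddInProb P (fun n ω => bv n ω i)) :
    ∀ i, SqrtNBddInProb P (fun n ω => θv n ω i) := by
  rcases isEmpty_or_nonempty κ with hemp | hne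
  · intro i; exact (IsEmpty.false i).elim
  have hMdet : IsUnit M.det := (Matrix.isUnit_iff_isUnit_det M).mp hM
  have hmul : M⁻¹ * M = 1 := Matrix.nonsing_inv_mul M hMdet
  -- pointwise representation
  have hθ : ∀ n ω, θv n ω = M⁻¹ *ᵥ (bv n ω - Rm n ω *ᵥ θv n ω) := by
    intro n ω
    have h1 : M *ᵥ θv n ω = bv n ω - Rm n ω *ᵥ θv n ω := by
      have := hfoc n ω
      rw [Matrix.add_mulVec] at this
      rw [← this]; abel
    calc θv n ω = (M⁻¹ * M) *ᵥ θv n ω := by rw [hmul, Matrix.one_mulVec]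
      _ = M⁻¹ *ᵥ (M *ᵥ θv n ω) := by rw [← Matrix.mulVec_mulVec]
      _ = M⁻¹ *ᵥ (bv n ω - Rm n ω *ᵥ θv n ω) := by rw [h1]
  set a : ℝ := (∑ i : κ, ∑ j : κ, |M⁻¹ i j|) + 1 with ha_def
  have ha1 : (1:ℝ) ≤ a := by
    have : (0:ℝ) ≤ ∑ i : κ, ∑ j : κ, |M⁻¹ i j| :=
      Finset.sum_nonneg fun i _ => Finset.sum_nonneg fun j _ => abs_nonneg _
    simp only [ha_def]; linarith
  have ha0 : (0:ℝ) < a := by linarith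
  have hrowsum : ∀ i : κ, ∑ j : κ, |M⁻¹ i j| ≤ a := by
    intro i
    have : ∑ j : κ, |M⁻¹ i j| ≤ ∑ i : κ, ∑ j : κ, |M⁻¹ i j| :=
      Finset.single_le_sum (f := fun i => ∑ j : κ, |M⁻¹ i j|)
        (fun i _ => Finset.sum_nonneg fun j _ => abs_nonneg _) (Finset.mem_univ i)
    linarith
  set K : ℕ := Fintype.card κ with hK_def
  have hK1 : 1 ≤ K := Fintype.card_pos
  intro i δ hδ
  set K' : ℕ := K^2 + K with hK'_def
  have hK'0 : 0 < K' := by positivity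
  set δ' : ℝ := δ / K' with hδ'_def
  have hδ'0 : 0 < δ' := by
    apply div_pos hδ; exact_mod_cast hK'0
  choose MR hMR using fun jk : κ × κ => hR jk.1 jk.2 δ' hδ'0
  choose Mb hMb using fun j : κ => hb j δ' hδ'0
  set Mr : ℝ := max (Finset.univ.sup' (Finset.univ_nonempty (α := κ × κ)) MR) 0 with hMr_def
  set MB : ℝ := max (Finset.univ.sup' (Finset.univ_nonempty (α := κ)) Mb) 0 with hMB_def
  have hMr0 : (0:ℝ) ≤ Mr := le_max_right _ _
  have hMB0 : (0:ℝ) ≤ MB := le_max_right _ _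
  have hMrle : ∀ jk : κ × κ, MR jk ≤ Mr :=
    fun jk => (Finset.le_sup' MR (Finset.mem_univ jk)).trans (le_max_left _ _)
  have hMble : ∀ j : κ, Mb j ≤ MB :=
    fun j => (Finset.le_sup' Mb (Finset.mem_univ j)).trans (le_max_left _ _)
  refine ⟨2 * a * MB, ?_⟩
  set c : ℝ := 2 * a * (K:ℝ) * Mr with hc_def
  have hc0 : 0 ≤ c := by positivity
  have hsqrt_ev : ∀ᶠ n : ℕ in Filter.atTop, c + 1 ≤ Real.sqrt n := by
    filter_upwards [Filter.eventually_ge_atTop ⌈(c+1)^2⌉₊] with n hn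
    have h1 : (c+1)^2 ≤ (n:ℝ) := by
      calc (c+1)^2 ≤ (⌈(c+1)^2⌉₊ : ℝ) := Nat.le_ceil _
        _ ≤ n := by exact_mod_cast hn
    calc c + 1 = Real.sqrt ((c+1)^2) := (Real.sqrt_sq (by linarith)).symm
      _ ≤ Real.sqrt n := Real.sqrt_le_sqrt h1
  have hRall : ∀ᶠ n : ℕ in Filter.atTop, ∀ jk : κ × κ,
      (P {ω | MR jk < |Real.sqrt n * Rm n ω jk.1 jk.2|}).toReal ≤ δ' :=
    Filter.eventually_all.mpr fun jk => hMR jk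
  have hball : ∀ᶠ n : ℕ in Filter.atTop, ∀ j : κ,
      (P {ω | Mb j < |Real.sqrt n * bv n ω j|}).toReal ≤ δ' :=
    Filter.eventually_all.mpr fun j => hMb j
  filter_upwards [hRall, hball, hsqrt_ev] with n hRn hbn hsn
  set sn : ℝ := Real.sqrt n with hsn_def
  have hsn0 : (0:ℝ) ≤ sn := Real.sqrt_nonneg _
  -- the subset claim
  have hsub : {ω | 2 * a * MB < |sn * θv n ω i|} ⊆
      (⋃ jk ∈ (Finset.univ : Finset (κ × κ)),
        {ω | MR jk < |sn * Rm n ω jk.1 jk.2|}) ∪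
      (⋃ j ∈ (Finset.univ : Finset κ), {ω | Mb j < |sn * bv n ω j|}) := by
    intro ω hω
    simp only [Set.mem_setOf_eq] at hω
    by_contra hcon
    simp only [Set.mem_union, Set.mem_iUnion, Set.mem_setOf_eq, Finset.mem_univ,
      exists_true_left, not_or, not_exists, not_lt] at hcon
    obtain ⟨hRb, hbb⟩ := hcon
    -- pointwise bounds
    have hRb' : ∀ j k : κ, |sn * Rm n ω j k| ≤ Mr :=
      fun j k => (hRb (j, k)).trans (hMrle (j, k))
    have hbb' : ∀ j : κ, |sn * bv n ω j| ≤ MB := fun j => (hbb j).trans (hMble j)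
    set τ : ℝ := Finset.univ.sup' (Finset.univ_nonempty (α := κ))
      (fun k => |θv n ω k|) with hτ_def
    have hτk : ∀ k : κ, |θv n ω k| ≤ τ := by
      intro k; rw [hτ_def]; exact Finset.le_sup' (fun k => |θv n ω k|) (Finset.mem_univ k)
    have hτ0 : 0 ≤ τ := (abs_nonneg _).trans (hτk i)
    obtain ⟨k₀, _, hk₀⟩ := Finset.exists_mem_eq_sup'
      (Finset.univ_nonempty (α := κ)) (fun k => |θv n ω k|)
    have expand : sn * θv n ω k₀ =
        ∑ j : κ, M⁻¹ k₀ j * (sn * bv n ω j - sn * ∑ k : κ, Rm n ω j k * θv n ω k) := by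
      have h1 := congrFun (hθ n ω) k₀
      simp only [Matrix.mulVec, dotProduct, Pi.sub_apply] at h1
      rw [h1, Finset.mul_sum]
      exact Finset.sum_congr rfl fun j _ => by ring
    have hwj : ∀ j : κ, |sn * bv n ω j - sn * ∑ k : κ, Rm n ω j k * θv n ω k| ≤
        MB + (K:ℝ) * Mr * τ := by
      intro j
      have h2 : |sn * ∑ k : κ, Rm n ω j k * θv n ω k| ≤ (K:ℝ) * Mr * τ := by
        rw [Finset.mul_sum]
        calc |∑ k : κ, sn * (Rm n ω j k * θv n ω k)| ≤
            ∑ k : κ, |sn * (Rm n ω j k * θv n ω k)| := Finset.abs_sum_le_sum_abs _ _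
          _ ≤ ∑ _k : κ, Mr * τ := by
              refine Finset.sum_le_sum fun k _ => ?_
              rw [← mul_assoc, abs_mul]
              exact mul_le_mul (hRb' j k) (hτk k) (abs_nonneg _) hMr0
          _ = (K:ℝ) * Mr * τ := by
              rw [Finset.sum_const, Finset.card_univ, nsmul_eq_mul, ← hK_def, mul_assoc]
      calc |sn * bv n ω j - sn * ∑ k : κ, Rm n ω j k * θv n ω k| ≤
          |sn * bv n ω j| + |sn * ∑ k : κ, Rm n ω j k * θv n ω k| := abs_sub_le' _ _
        _ ≤ MB + (K:ℝ) * Mr * τ := add_le_add (hbb' j) h2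
    have hτbound : sn * τ ≤ a * MB + a * (K:ℝ) * Mr * τ := by
      have hB0 : 0 ≤ MB + (K:ℝ) * Mr * τ := by positivity
      calc sn * τ = |sn * θv n ω k₀| := by
            rw [hτ_def, hk₀, abs_mul, abs_of_nonneg hsn0]
        _ ≤ ∑ j : κ, |M⁻¹ k₀ j| * (MB + (K:ℝ) * Mr * τ) := by
            rw [expand]
            refine (Finset.abs_sum_le_sum_abs _ _).trans ?_
            refine Finset.sum_le_sum fun j _ => ?_
            rw [abs_mul]
            exact mul_le_mul_of_nonneg_left (hwj j) (abs_nonneg _)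
        _ = (∑ j : κ, |M⁻¹ k₀ j|) * (MB + (K:ℝ) * Mr * τ) := by
            rw [Finset.sum_mul]
        _ ≤ a * (MB + (K:ℝ) * Mr * τ) :=
            mul_le_mul_of_nonneg_right (hrowsum k₀) hB0
        _ = a * MB + a * (K:ℝ) * Mr * τ := by ring
    -- conclude
    have hKMr0 : 0 ≤ a * (K:ℝ) * Mr := by positivity
    have hτsn : (c + 1) * τ ≤ sn * τ := mul_le_mul_of_nonneg_right hsn hτ0
    have key : sn * τ ≤ 2 * a * MB := by
      simp only [hc_def] at hτsn
      nlinarith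
    have : |sn * θv n ω i| ≤ 2 * a * MB := by
      rw [abs_mul, abs_of_nonneg hsn0]
      calc sn * |θv n ω i| ≤ sn * τ := mul_le_mul_of_nonneg_left (hτk i) hsn0
        _ ≤ 2 * a * MB := key
    linarith
  -- measure bound
  have hmb : P {ω | 2 * a * MB < |sn * θv n ω i|} ≤ ENNReal.ofReal δ := by
    have hle1 : ∀ jk : κ × κ, P {ω | MR jk < |sn * Rm n ω jk.1 jk.2|} ≤
        ENNReal.ofReal δ' := fun jk =>
      (ENNReal.le_ofReal_iff_toReal_le (MeasureTheory.measure_ne_top _ _) hδ'0.le).mpr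
        (hRn jk)
    have hle2 : ∀ j : κ, P {ω | Mb j < |sn * bv n ω j|} ≤ ENNReal.ofReal δ' := fun j =>
      (ENNReal.le_ofReal_iff_toReal_le (MeasureTheory.measure_ne_top _ _) hδ'0.le).mpr
        (hbn j)
    calc P {ω | 2 * a * MB < |sn * θv n ω i|} ≤
        P ((⋃ jk ∈ (Finset.univ : Finset (κ × κ)),
            {ω | MR jk < |sn * Rm n ω jk.1 jk.2|}) ∪
          (⋃ j ∈ (Finset.univ : Finset κ), {ω | Mb j < |sn * bv n ω j|})) :=
          MeasureTheory.measure_mono hsub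
      _ ≤ P (⋃ jk ∈ (Finset.univ : Finset (κ × κ)),
            {ω | MR jk < |sn * Rm n ω jk.1 jk.2|}) +
          P (⋃ j ∈ (Finset.univ : Finset κ), {ω | Mb j < |sn * bv n ω j|}) :=
          MeasureTheory.measure_union_le _ _
      _ ≤ (∑ jk ∈ (Finset.univ : Finset (κ × κ)),
            P {ω | MR jk < |sn * Rm n ω jk.1 jk.2|}) +
          ∑ j ∈ (Finset.univ : Finset κ), P {ω | Mb j < |sn * bv n ω j|} :=
          add_le_add (MeasureTheory.measure_biUnion_finset_le _ _)
            (MeasureTheory.measure_biUnion_finset_le _ _)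
      _ ≤ (∑ _jk ∈ (Finset.univ : Finset (κ × κ)), ENNReal.ofReal δ') +
          ∑ _j ∈ (Finset.univ : Finset κ), ENNReal.ofReal δ' :=
          add_le_add (Finset.sum_le_sum fun jk _ => hle1 jk)
            (Finset.sum_le_sum fun j _ => hle2 j)
      _ = (K^2 + K : ℕ) * ENNReal.ofReal δ' := by
          rw [Finset.sum_const, Finset.sum_const, Finset.card_univ, Finset.card_univ,
            Fintype.card_prod, nsmul_eq_mul, nsmul_eq_mul, ← hK_def]
          push_cast
          ring
      _ = ENNReal.ofReal ((K' : ℝ) * δ') := by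
          rw [ENNReal.ofReal_mul (by positivity), ENNReal.ofReal_natCast, hK'_def]
      _ = ENNReal.ofReal δ := by
          rw [hδ'_def, mul_div_cancel₀]
          exact_mod_cast hK'0.ne'
  calc (P {ω | 2 * a * MB < |sn * θv n ω i|}).toReal ≤
      (ENNReal.ofReal δ).toReal := ENNReal.toReal_mono ENNReal.ofReal_ne_top hmb
    _ = δ := ENNReal.toReal_ofReal hδ.le

end SqrtAux
namespace SqrtAux

theorem isUnit_block {κ : Type*} [Fintype κ] [DecidableEq κ]
    (Γ : Matrix κ κ ℝ) (μ : κ → ℝ) (hΓ : IsUnit Γ) :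
    IsUnit (Matrix.fromBlocks
      (Matrix.of fun i j => Γ i j + μ i * μ j)
      (Matrix.of fun i (_ : Unit) => μ i)
      (Matrix.of fun (_ : Unit) j => μ j) (1 : Matrix Unit Unit ℝ)) := by
  rw [Matrix.isUnit_iff_isUnit_det, Matrix.det_fromBlocks_one₂₂]
  have : (Matrix.of fun i j => Γ i j + μ i * μ j) -
      (Matrix.of fun i (_ : Unit) => μ i) * (Matrix.of fun (_ : Unit) j => μ j) = Γ := by
    ext i j
    simp [Matrix.mul_apply, Matrix.sub_apply]
  rw [this]
  exact (Matrix.isUnit_iff_isUnit_det Γ).mp hΓ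

end SqrtAux
namespace SqrtAux

open Filter

variable {Ω : Type*} [MeasurableSpace Ω] {P : MeasureTheory.Measure Ω}
  [MeasureTheory.IsProbabilityMeasure P]

theorem const_mul {Z : ℕ → Ω → ℝ} (c : ℝ) (hZ : SqrtNBddInProb P Z) :
    SqrtNBddInProb P (fun n ω => c * Z n ω) :=
  of_le (c := |c|) hZ (by filter_upwards with n ω; rw [abs_mul])

theorem sub' {Z W : ℕ → Ω → ℝ} (hZ : SqrtNBddInProb P Z) (hW : SqrtNBddInProb P W) :
    SqrtNBddInProb P (fun n ω => Z n ω - W n ω) :=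
  congr' (add hZ (neg hW)) (by filter_upwards with n ω; ring)

/-- reindex `∑_{t∈Icc(p+1)n} f(t-1)` to sums starting at 1. -/
theorem sum_shift (f : ℤ → ℝ) {p n : ℕ} (h1 : 1 ≤ p) (h2 : p ≤ n) :
    ∑ t ∈ Finset.Icc (p+1) n, f ((t:ℤ)-1) =
      ∑ s ∈ Finset.Icc 1 (n-1), f (s:ℤ) - ∑ s ∈ Finset.Icc 1 (p-1), f (s:ℤ) := by
  have hbij : ∑ t ∈ Finset.Icc (p+1) n, f ((t:ℤ)-1) =
      ∑ s ∈ Finset.Icc p (n-1), f (s:ℤ) := by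
    refine Finset.sum_bij' (fun t _ => t - 1) (fun s _ => s + 1) ?_ ?_ ?_ ?_ ?_
    · intro t ht
      simp only [Finset.mem_Icc] at ht ⊢
      omega
    · intro s hs
      simp only [Finset.mem_Icc] at hs ⊢
      omega
    · intro t ht
      simp only [Finset.mem_Icc] at ht
      omega
    · intro s hs
      simp only [Finset.mem_Icc] at hs
      omega
    · intro t ht
      simp only [Finset.mem_Icc] at ht
      have he : (t:ℤ)-1 = (((t-1:ℕ)):ℤ) := by omega
      rw [he]
  rw [hbij]
  have e1 : Finset.Icc p (n-1) = Finset.Ioc (p-1) (n-1) := by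
    rw [← Finset.Icc_add_one_left_eq_Ioc]
    congr 1
    omega
  have e2 : Finset.Icc 1 (n-1) = Finset.Ioc 0 (n-1) := by
    rw [← Finset.Icc_add_one_left_eq_Ioc]; rfl
  have e3 : Finset.Icc 1 (p-1) = Finset.Ioc 0 (p-1) := by
    rw [← Finset.Icc_add_one_left_eq_Ioc]; rfl
  rw [e1, e2, e3]
  have := Finset.sum_Ioc_consecutive (fun s : ℕ => f (s:ℤ)) (by omega : 0 ≤ p-1)
    (by omega : p-1 ≤ n-1)
  linarith [this]

/-- reindex `∑_{s∈Icc 1 (n-1)} g(s+1)`. -/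
theorem sum_shift2 (g : ℤ → ℝ) {n : ℕ} (hn : 1 ≤ n) :
    ∑ s ∈ Finset.Icc 1 (n-1), g ((s:ℤ)+1) =
      ∑ t ∈ Finset.Icc 1 n, g (t:ℤ) - g 1 := by
  have hbij : ∑ s ∈ Finset.Icc 1 (n-1), g ((s:ℤ)+1) =
      ∑ t ∈ Finset.Icc 2 n, g (t:ℤ) := by
    refine Finset.sum_bij' (fun s _ => s + 1) (fun t _ => t - 1) ?_ ?_ ?_ ?_ ?_
    · intro s hs; simp only [Finset.mem_Icc] at hs ⊢; omega
    · intro t ht; simp only [Finset.mem_Icc] at ht ⊢; omega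
    · intro s hs; simp only [Finset.mem_Icc] at hs; omega
    · intro t ht; simp only [Finset.mem_Icc] at ht; omega
    · intro s hs
      have he : (s:ℤ)+1 = (((s+1:ℕ)):ℤ) := by omega
      rw [he]
  rw [hbij]
  have e1 : Finset.Icc 2 n = Finset.Ioc 1 n := by rw [← Finset.Icc_add_one_left_eq_Ioc]; rfl
  have e2 : Finset.Icc 1 n = Finset.Ioc 0 n := by rw [← Finset.Icc_add_one_left_eq_Ioc]; rfl
  have e3 : Finset.Ioc 0 1 = {1} := rfl
  rw [e1, e2]
  have := Finset.sum_Ioc_consecutive (fun t : ℕ => g (t:ℤ)) (by omega : 0 ≤ 1)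
    (by omega : 1 ≤ n)
  rw [e3] at this
  simp only [Finset.sum_singleton] at this
  push_cast at this ⊢
  linarith [this]

/-- split `∑_{t∈Icc(p+1)n} h(t)`. -/
theorem sum_split (h : ℤ → ℝ) {p n : ℕ} (h2 : p ≤ n) :
    ∑ t ∈ Finset.Icc (p+1) n, h (t:ℤ) =
      ∑ t ∈ Finset.Icc 1 n, h (t:ℤ) - ∑ t ∈ Finset.Icc 1 p, h (t:ℤ) := by
  have e1 : Finset.Icc (p+1) n = Finset.Ioc p n := by rw [← Finset.Icc_add_one_left_eq_Ioc]
  have e2 : Finset.Icc 1 n = Finset.Ioc 0 n := by rw [← Finset.Icc_add_one_left_eq_Ioc]; rfl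
  have e3 : Finset.Icc 1 p = Finset.Ioc 0 p := by rw [← Finset.Icc_add_one_left_eq_Ioc]; rfl
  rw [e1, e2, e3]
  have := Finset.sum_Ioc_consecutive (fun t : ℕ => h (t:ℤ)) (by omega : 0 ≤ p) h2
  linarith [this]

/-- if the `n`-term sample average is `√n`-consistent for `L`, so is the
`(n-1)`-term average divided by `n`. -/
theorem bdd_centered {F : ℕ → Ω → ℝ} {L : ℝ}
    (h : SqrtNBddInProb P (fun n ω => (n:ℝ)⁻¹ * ∑ s ∈ Finset.Icc 1 n, F s ω - L)) :
    SqrtNBddInProb P (fun n ω => (n:ℝ)⁻¹ * ∑ s ∈ Finset.Icc 1 (n-1), F s ω - L) := by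
  have h1 : SqrtNBddInProb P (fun n ω =>
      (((n-1:ℕ):ℝ)/(n:ℝ)) * (((n-1:ℕ):ℝ)⁻¹ * ∑ s ∈ Finset.Icc 1 (n-1), F s ω - L)) := by
    refine of_le (c := 1) (shift h) ?_
    filter_upwards [eventually_ge_atTop 1] with n hn ω
    rw [one_mul, abs_mul]
    have hn1 : (1:ℝ) ≤ (n:ℝ) := by exact_mod_cast hn
    have hfrac : |((n-1:ℕ):ℝ)/(n:ℝ)| ≤ 1 := by
      rw [abs_div, abs_of_nonneg (by positivity : (0:ℝ) ≤ ((n-1:ℕ):ℝ)),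
        abs_of_nonneg (by positivity : (0:ℝ) ≤ (n:ℝ))]
      rw [div_le_one (by linarith)]
      have : ((n-1:ℕ):ℝ) ≤ ((n:ℕ):ℝ) := by exact_mod_cast Nat.sub_le n 1
      linarith
    calc |((n-1:ℕ):ℝ)/(n:ℝ)| * |((n-1:ℕ):ℝ)⁻¹ * ∑ s ∈ Finset.Icc 1 (n-1), F s ω - L| ≤
        1 * |((n-1:ℕ):ℝ)⁻¹ * ∑ s ∈ Finset.Icc 1 (n-1), F s ω - L| :=
          mul_le_mul_of_nonneg_right hfrac (abs_nonneg _)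
      _ = _ := one_mul _
  have h2 : SqrtNBddInProb P (fun n ω => (-L) / (n:ℝ)) := div_n measurable_const
  refine congr' (add h1 h2) ?_
  filter_upwards [eventually_ge_atTop 2] with n hn ω
  have hn1 : (2:ℝ) ≤ (n:ℝ) := by exact_mod_cast hn
  have hc : ((n-1:ℕ):ℝ) = (n:ℝ) - 1 := by
    have : (1:ℕ) ≤ n := by omega
    push_cast [this]; ring
  rw [hc]
  have hne : (n:ℝ) ≠ 0 := by linarith
  have hne1 : (n:ℝ) - 1 ≠ 0 := by linarith
  field_simp
  ring

end SqrtAux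
namespace SqrtAux

/-- sample second-moment matrix of the regression (with intercept). -/
def MnM {Ω : Type*} {ι : Type*} [DecidableEq ι] (p : ℕ) (σ : Finset ι)
    (Yf : ℤ → ι → Ω → ℝ) (n : ℕ) (ω : Ω) :
    Matrix (↥σ ⊕ Unit) (↥σ ⊕ Unit) ℝ :=
  Matrix.fromBlocks
    (Matrix.of fun a b => (n:ℝ)⁻¹ *
      ∑ t ∈ Finset.Icc (p+1) n, Yf ((t:ℤ)-1) ↑a ω * Yf ((t:ℤ)-1) ↑b ω)
    (Matrix.of fun a _ => (n:ℝ)⁻¹ * ∑ t ∈ Finset.Icc (p+1) n, Yf ((t:ℤ)-1) ↑a ω)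
    (Matrix.of fun _ b => (n:ℝ)⁻¹ * ∑ t ∈ Finset.Icc (p+1) n, Yf ((t:ℤ)-1) ↑b ω)
    (Matrix.of fun _ _ => (n:ℝ)⁻¹ * ((Finset.Icc (p+1) n).card : ℝ))

/-- sample cross term between regressors and innovations. -/
def bnV {Ω : Type*} {ι : Type*} [DecidableEq ι] (p : ℕ) (σ : Finset ι)
    (Yf : ℤ → ι → Ω → ℝ) (ηf : ℤ → Ω → ℝ) (n : ℕ) (ω : Ω) : ↥σ ⊕ Unit → ℝ :=
  Sum.elim
    (fun a => -((n:ℝ)⁻¹ * ∑ t ∈ Finset.Icc (p+1) n, Yf ((t:ℤ)-1) ↑a ω * ηf (t:ℤ) ω))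
    (fun _ => -((n:ℝ)⁻¹ * ∑ t ∈ Finset.Icc (p+1) n, ηf (t:ℤ) ω))

/-- population second-moment matrix. -/
def Mpop {ι : Type*} [DecidableEq ι] (σ : Finset ι)
    (cov : ι → ι → ℝ) (μ : ι → ℝ) : Matrix (↥σ ⊕ Unit) (↥σ ⊕ Unit) ℝ :=
  Matrix.fromBlocks
    (Matrix.of fun a b => cov ↑a ↑b + μ ↑a * μ ↑b)
    (Matrix.of fun a _ => μ ↑a)
    (Matrix.of fun _ b => μ ↑b)
    (1 : Matrix Unit Unit ℝ)

theorem Mpop_isUnit {ι : Type*} [DecidableEq ι] (σ : Finset ι)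
    (cov : ι → ι → ℝ) (μ : ι → ℝ)
    (h : IsUnit (Matrix.of fun a b : ↥σ => cov ↑a ↑b)) :
    IsUnit (Mpop σ cov μ) :=
  isUnit_block (Matrix.of fun a b : ↥σ => cov ↑a ↑b) (fun a => μ ↑a) h

end SqrtAux

/-- Theorem 1, consistency part: under Assumption 2 the least
squares estimators of every component `r` are `√n`-consistent. -/
theorem stmt4 {d p : ℕ} (hd : 0 < d) (hp : 0 < p)
    {Ω : Type*} [MeasurableSpace Ω] (P : Measure Ω) [IsProbabilityMeasure P]
    (Ad : ℤ → Ω → Matrix (Fin d) (Fin d) ℝ)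
    (ε : ℤ → Ω → (Fin d → ℝ)) (mE : Fin d → ℝ)
    (X : ℤ → Ω → (Fin d → ℝ))
    (A : Fin p → Matrix (Fin d) (Fin d) ℝ)
    (G : Fin p → Matrix (Fin d) (Fin d) ℝ → Matrix (Fin d) (Fin d) ℝ)
    (S : Fin d → Finset (Fin p × Fin d))
    (μY : Fin d → (Fin p × Fin d) → ℝ)
    (what : Fin d → ℕ → Ω → (Fin p × Fin d → ℝ))
    (muhat : Fin d → ℕ → Ω → ℝ)
    -- the network process: measurable, `[−1,1]`-valued, strictly stationary
    (hAdmeas : ∀ t, Measurable (Ad t))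
    (hAdval : ∀ t ω a b, Ad t ω a b ∈ Set.Icc (-1 : ℝ) 1)
    (hAdstat : StrictlyStationary P Ad)
    -- the innovations: i.i.d. with mean `mE`, independent of the network's past
    (hiid : IID P ε)
    (hmean : ∀ a, ∫ ω, ε 0 ω a ∂P = mE a)
    (hindep : FutureInnovIndep P ε Ad)
    (hGmeas : ∀ j, Measurable (G j))
    (hXmeas : ∀ t, Measurable (X t))
    -- the NAR(p) model
    (hmodel : ∀ (t : ℤ) (ω : Ω),
      X t ω = (∑ j : Fin p,
          ((A j).hadamard (G j (Ad (t - 1 - (j : ℕ)) ω))) *ᵥ X (t - 1 - (j : ℕ)) ω)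
        + ε t ω)
    -- `S r` is the index set of coefficients with influence on component `r`
    (hS : ∀ (r : Fin d) (ji : Fin p × Fin d),
      ji ∈ S r ↔ 0 < ∫ ω, |G ji.1 (Ad 1 ω) r ji.2| ∂P)
    -- parameters outside `S r` are set to zero
    (hA0 : ∀ (r : Fin d) (ji : Fin p × Fin d), ji ∉ S r → A ji.1 r ji.2 = 0)
    -- the least squares estimators
    (hwsupp : ∀ r n ω ji, ji ∉ S r → what r n ω ji = 0)
    (hLS : ∀ (r : Fin d) (n : ℕ) (ω : Ω) (w' : Fin p × Fin d → ℝ) (m' : ℝ),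
      (∀ ji, ji ∉ S r → w' ji = 0) →
      (∑ t ∈ Finset.Icc (p + 1) n, (X (t : ℤ) ω r -
          (∑ ji : Fin p × Fin d, what r n ω ji * Yreg G Ad X r ((t : ℤ) - 1) ji ω) -
          muhat r n ω) ^ 2) ≤
      (∑ t ∈ Finset.Icc (p + 1) n, (X (t : ℤ) ω r -
          (∑ ji : Fin p × Fin d, w' ji * Yreg G Ad X r ((t : ℤ) - 1) ji ω) - m') ^ 2))
    -- Assumption 2(1)
    (hμY : ∀ r ji, μY r ji = ∫ ω, Yreg G Ad X r 1 ji ω ∂P)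
    (hmeanY : ∀ r ji, SqrtNBddInProb P (fun n ω =>
      (n : ℝ)⁻¹ * (∑ s ∈ Finset.Icc 1 n, Yreg G Ad X r (s : ℤ) ji ω) - μY r ji))
    (hΓinv : ∀ r, IsUnit (Matrix.of fun a b : (S r : Finset (Fin p × Fin d)) =>
      covR P (Yreg G Ad X r 1 a) (Yreg G Ad X r 1 b)))
    (hsampleCov : ∀ r ji kl, SqrtNBddInProb P (fun n ω =>
      (n : ℝ)⁻¹ * (∑ t ∈ Finset.Icc 1 n,
        (Yreg G Ad X r (t : ℤ) ji ω - μY r ji) * (Yreg G Ad X r (t : ℤ) kl ω - μY r kl))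
      - covR P (Yreg G Ad X r 1 ji) (Yreg G Ad X r 1 kl)))
    -- Assumption 2(2)
    (hmeanEps : ∀ r, SqrtNBddInProb P (fun n ω =>
      (n : ℝ)⁻¹ * (∑ t ∈ Finset.Icc 1 n, ε (t : ℤ) ω r) - mE r))
    (hcov0 : ∀ r ji, covR P (Yreg G Ad X r 0 ji) (fun ω => ε 1 ω r) = 0)
    (hcrossCov : ∀ r ji, SqrtNBddInProb P (fun n ω =>
      (n : ℝ)⁻¹ * ∑ t ∈ Finset.Icc 1 n,
        (Yreg G Ad X r (t : ℤ) ji ω - μY r ji) * (ε ((t : ℤ) + 1) ω r - mE r)))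
    -- Assumption 2(3): finite fourth moments
    (hY4 : ∀ r ji, MemLp (Yreg G Ad X r 0 ji) 4 P)
    (hE4 : ∀ a, MemLp (fun ω => ε 0 ω a) 4 P) :
    -- conclusion: `√n`-consistency of `μ̂_r` and `ŵ_r`
    ∀ r : Fin d,
      SqrtNBddInProb P (fun n ω => muhat r n ω - mE r) ∧
      ∀ ji ∈ S r,
        SqrtNBddInProb P (fun n ω => what r n ω ji - A ji.1 r ji.2) := by
  intro r
  classical
  -- abbreviations
  have quad_zero : ∀ {Aq Bq : ℝ}, 0 ≤ Aq → (∀ s : ℝ, 0 ≤ s^2 * Aq - 2 * s * Bq) →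
      Bq = 0 := by
    intro Aq Bq hA h
    have h1 := h (Bq / (Aq + 1))
    have hA1 : (0:ℝ) < Aq + 1 := by linarith
    have h2 : 0 ≤ (Bq/(Aq+1))^2 * Aq - 2 * (Bq/(Aq+1)) * Bq := h1
    have hq : Bq = (Bq/(Aq+1)) * (Aq+1) := by field_simp
    set q := Bq/(Aq+1) with hqdef
    rw [hq] at h2
    have hid : q^2 * Aq - 2 * q * (q * (Aq+1)) = -(q^2*(Aq+2)) := by ring
    rw [hid] at h2
    have h3 : q^2 * (Aq+2) ≤ 0 := by linarith
    have h5 : q^2 = 0 := le_antisymm (by nlinarith [sq_nonneg q]) (sq_nonneg q)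
    have h6 : q = 0 := by
      have := sq_eq_zero_iff.mp h5
      exact this
    rw [hq, h6, zero_mul]
  -- directional first-order condition of least squares
  have hFOCdir : ∀ (n : ℕ) (ω : Ω) (v : Fin p × Fin d → ℝ) (c : ℝ),
      (∀ ji, ji ∉ S r → v ji = 0) →
      ∑ t ∈ Finset.Icc (p+1) n,
        (X (t:ℤ) ω r - (∑ ji : Fin p × Fin d, what r n ω ji * Yreg G Ad X r ((t:ℤ)-1) ji ω)
          - muhat r n ω) *
        ((∑ ji : Fin p × Fin d, v ji * Yreg G Ad X r ((t:ℤ)-1) ji ω) + c) = 0 := by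
    intro n ω v c hv
    refine quad_zero (Aq := ∑ t ∈ Finset.Icc (p+1) n,
        ((∑ ji : Fin p × Fin d, v ji * Yreg G Ad X r ((t:ℤ)-1) ji ω) + c)^2)
      (Finset.sum_nonneg fun t _ => sq_nonneg _) ?_
    intro s
    have hsupp : ∀ ji, ji ∉ S r → what r n ω ji + s * v ji = 0 := by
      intro ji h
      rw [hwsupp r n ω ji h, hv ji h]
      ring
    have hls := hLS r n ω (fun ji => what r n ω ji + s * v ji) (muhat r n ω + s * c) hsupp
    have hrhs : ∀ t ∈ Finset.Icc (p+1) n,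
        (X (t:ℤ) ω r - (∑ ji : Fin p × Fin d,
            (what r n ω ji + s * v ji) * Yreg G Ad X r ((t:ℤ)-1) ji ω)
          - (muhat r n ω + s * c))^2
        = ((X (t:ℤ) ω r - (∑ ji : Fin p × Fin d,
              what r n ω ji * Yreg G Ad X r ((t:ℤ)-1) ji ω) - muhat r n ω)
          - s * ((∑ ji : Fin p × Fin d, v ji * Yreg G Ad X r ((t:ℤ)-1) ji ω) + c))^2 := by
      intro t _
      have hsum : ∑ ji : Fin p × Fin d,
          (what r n ω ji + s * v ji) * Yreg G Ad X r ((t:ℤ)-1) ji ω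
          = (∑ ji : Fin p × Fin d, what r n ω ji * Yreg G Ad X r ((t:ℤ)-1) ji ω)
            + s * ∑ ji : Fin p × Fin d, v ji * Yreg G Ad X r ((t:ℤ)-1) ji ω := by
        rw [Finset.mul_sum, ← Finset.sum_add_distrib]
        exact Finset.sum_congr rfl fun ji _ => by ring
      rw [hsum]
      ring
    rw [Finset.sum_congr rfl hrhs] at hls
    have hexp : ∀ t ∈ Finset.Icc (p+1) n,
        ((X (t:ℤ) ω r - (∑ ji : Fin p × Fin d,
              what r n ω ji * Yreg G Ad X r ((t:ℤ)-1) ji ω) - muhat r n ω)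
          - s * ((∑ ji : Fin p × Fin d, v ji * Yreg G Ad X r ((t:ℤ)-1) ji ω) + c))^2
        = (X (t:ℤ) ω r - (∑ ji : Fin p × Fin d,
              what r n ω ji * Yreg G Ad X r ((t:ℤ)-1) ji ω) - muhat r n ω)^2
          - 2 * s * ((X (t:ℤ) ω r - (∑ ji : Fin p × Fin d,
              what r n ω ji * Yreg G Ad X r ((t:ℤ)-1) ji ω) - muhat r n ω) *
            ((∑ ji : Fin p × Fin d, v ji * Yreg G Ad X r ((t:ℤ)-1) ji ω) + c))
          + s^2 * ((∑ ji : Fin p × Fin d, v ji * Yreg G Ad X r ((t:ℤ)-1) ji ω) + c)^2 :=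
      fun t _ => by ring
    rw [Finset.sum_congr rfl hexp, Finset.sum_add_distrib, Finset.sum_sub_distrib,
      ← Finset.mul_sum, ← Finset.mul_sum] at hls
    linarith
  -- representation of the model in regression form
  have hXrep : ∀ (t : ℤ) (ω : Ω), X t ω r =
      (∑ ji : Fin p × Fin d, A ji.1 r ji.2 * Yreg G Ad X r (t-1) ji ω) + ε t ω r := by
    intro t ω
    have h := congrFun (hmodel t ω) r
    simp only [Pi.add_apply, Finset.sum_apply, Matrix.mulVec, dotProduct,
      Matrix.hadamard_apply] at h
    rw [h, Fintype.sum_prod_type]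
    congr 1
    refine Finset.sum_congr rfl fun j _ => Finset.sum_congr rfl fun i _ => ?_
    simp only [Yreg]
    ring
  -- the normal equations in matrix form
  have hfoc : ∀ (n : ℕ) (ω : Ω),
      (SqrtAux.MnM p (S r) (Yreg G Ad X r) n ω) *ᵥ
        (Sum.elim (fun a : ↥(S r) => A (a : Fin p × Fin d).1 r (a : Fin p × Fin d).2
            - what r n ω ↑a)
          (fun _ : Unit => mE r - muhat r n ω)) =
      SqrtAux.bnV p (S r) (Yreg G Ad X r) (fun t ω => ε t ω r - mE r) n ω := by
    intro n ω
    have hFOC0 := hFOCdir n ω (fun _ => 0) 1 (fun ji _ => rfl)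
    simp only [zero_mul, Finset.sum_const_zero, zero_add, mul_one] at hFOC0
    have hFOCa : ∀ a : ↥(S r), ∑ t ∈ Finset.Icc (p+1) n,
        (X (↑t) ω r - (∑ ji : Fin p × Fin d, what r n ω ji * Yreg G Ad X r ((t:ℤ)-1) ji ω)
          - muhat r n ω) * Yreg G Ad X r ((t:ℤ)-1) ↑a ω = 0 := by
      intro a
      have hsupp : ∀ ji, ji ∉ S r →
          (if ji = (↑a : Fin p × Fin d) then (1:ℝ) else 0) = 0 := by
        intro ji hji
        rw [if_neg]
        intro hcon
        exact hji (hcon ▸ a.2)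
      have h := hFOCdir n ω (fun ji => if ji = (↑a : Fin p × Fin d) then (1:ℝ) else 0) 0 hsupp
      simp only [ite_mul, one_mul, zero_mul, Finset.sum_ite_eq', Finset.mem_univ,
        if_true, add_zero] at h
      exact h
    have he : ∀ t ∈ Finset.Icc (p+1) n,
        X (↑t) ω r - (∑ ji : Fin p × Fin d, what r n ω ji * Yreg G Ad X r ((t:ℤ)-1) ji ω)
          - muhat r n ω
        = (∑ b : ↥(S r), (A (↑b : Fin p × Fin d).1 r (↑b : Fin p × Fin d).2 - what r n ω ↑b)
            * Yreg G Ad X r ((t:ℤ)-1) ↑b ω)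
          + ((mE r - muhat r n ω) + (ε (↑t) ω r - mE r)) := by
      intro t _
      rw [hXrep (↑t) ω]
      have h1 : ∑ b : ↥(S r), (A (↑b : Fin p × Fin d).1 r (↑b : Fin p × Fin d).2
            - what r n ω ↑b) * Yreg G Ad X r ((t:ℤ)-1) ↑b ω
          = ∑ ji : Fin p × Fin d, (A ji.1 r ji.2 - what r n ω ji)
            * Yreg G Ad X r ((t:ℤ)-1) ji ω := by
        rw [Finset.sum_coe_sort (S r)
          (fun ji => (A ji.1 r ji.2 - what r n ω ji) * Yreg G Ad X r ((t:ℤ)-1) ji ω)]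
        exact Finset.sum_subset (Finset.subset_univ _) (fun ji _ hji => by
          rw [hA0 r ji hji, hwsupp r n ω ji hji]; ring)
      rw [h1]
      have h2 : ∑ ji : Fin p × Fin d, (A ji.1 r ji.2 - what r n ω ji)
            * Yreg G Ad X r ((t:ℤ)-1) ji ω
          = (∑ ji : Fin p × Fin d, A ji.1 r ji.2 * Yreg G Ad X r ((t:ℤ)-1) ji ω)
            - ∑ ji : Fin p × Fin d, what r n ω ji * Yreg G Ad X r ((t:ℤ)-1) ji ω := by
        rw [← Finset.sum_sub_distrib]
        exact Finset.sum_congr rfl fun ji _ => by ring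
      rw [h2]
      ring
    funext i
    cases i with
    | inl a =>
      have key : ∑ t ∈ Finset.Icc (p+1) n,
          (X (↑t) ω r - (∑ ji : Fin p × Fin d, what r n ω ji * Yreg G Ad X r ((t:ℤ)-1) ji ω)
            - muhat r n ω) * Yreg G Ad X r ((t:ℤ)-1) ↑a ω
          = (∑ b : ↥(S r), (∑ t ∈ Finset.Icc (p+1) n,
              Yreg G Ad X r ((t:ℤ)-1) ↑a ω * Yreg G Ad X r ((t:ℤ)-1) ↑b ω)
              * (A (↑b : Fin p × Fin d).1 r (↑b : Fin p × Fin d).2 - what r n ω ↑b))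
            + ((∑ t ∈ Finset.Icc (p+1) n, Yreg G Ad X r ((t:ℤ)-1) ↑a ω) * (mE r - muhat r n ω)
              + ∑ t ∈ Finset.Icc (p+1) n,
                  Yreg G Ad X r ((t:ℤ)-1) ↑a ω * (ε (↑t) ω r - mE r)) := by
        calc ∑ t ∈ Finset.Icc (p+1) n,
            (X (↑t) ω r - (∑ ji : Fin p × Fin d,
              what r n ω ji * Yreg G Ad X r ((t:ℤ)-1) ji ω) - muhat r n ω)
              * Yreg G Ad X r ((t:ℤ)-1) ↑a ω
            = ∑ t ∈ Finset.Icc (p+1) n,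
              ((∑ b : ↥(S r), (Yreg G Ad X r ((t:ℤ)-1) ↑a ω * Yreg G Ad X r ((t:ℤ)-1) ↑b ω)
                  * (A (↑b : Fin p × Fin d).1 r (↑b : Fin p × Fin d).2 - what r n ω ↑b))
                + (Yreg G Ad X r ((t:ℤ)-1) ↑a ω * (mE r - muhat r n ω)
                  + Yreg G Ad X r ((t:ℤ)-1) ↑a ω * (ε (↑t) ω r - mE r))) := by
              refine Finset.sum_congr rfl fun t ht => ?_
              rw [he t ht, add_mul, Finset.sum_mul]
              congr 1
              · exact Finset.sum_congr rfl fun b _ => by ring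
              · ring
          _ = _ := by
              rw [Finset.sum_add_distrib, Finset.sum_add_distrib, Finset.sum_comm]
              congr 1
              · exact Finset.sum_congr rfl fun b _ => by rw [← Finset.sum_mul]
              · congr 1
                rw [← Finset.sum_mul]
      have key0 := key.symm.trans (hFOCa a)
      show (SqrtAux.MnM p (S r) (Yreg G Ad X r) n ω *ᵥ _) (Sum.inl a) = _
      simp only [SqrtAux.MnM, SqrtAux.bnV, Matrix.mulVec, dotProduct,
        Fintype.sum_sum_type, Matrix.fromBlocks_apply₁₁, Matrix.fromBlocks_apply₁₂,
        Matrix.of_apply, Sum.elim_inl, Sum.elim_inr, Finset.univ_unique,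
        Finset.sum_singleton]
      have hsum : ∑ b : ↥(S r), ((n:ℝ)⁻¹ * ∑ t ∈ Finset.Icc (p+1) n,
            Yreg G Ad X r ((t:ℤ)-1) ↑a ω * Yreg G Ad X r ((t:ℤ)-1) ↑b ω)
            * (A (↑b : Fin p × Fin d).1 r (↑b : Fin p × Fin d).2 - what r n ω ↑b)
          = (n:ℝ)⁻¹ * ∑ b : ↥(S r), (∑ t ∈ Finset.Icc (p+1) n,
            Yreg G Ad X r ((t:ℤ)-1) ↑a ω * Yreg G Ad X r ((t:ℤ)-1) ↑b ω)
            * (A (↑b : Fin p × Fin d).1 r (↑b : Fin p × Fin d).2 - what r n ω ↑b) := by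
        rw [Finset.mul_sum]
        exact Finset.sum_congr rfl fun b _ => by ring
      rw [hsum]
      linear_combination (n:ℝ)⁻¹ * key0
    | inr u =>
      have key : ∑ t ∈ Finset.Icc (p+1) n,
          (X (↑t) ω r - (∑ ji : Fin p × Fin d, what r n ω ji * Yreg G Ad X r ((t:ℤ)-1) ji ω)
            - muhat r n ω)
          = (∑ b : ↥(S r), (∑ t ∈ Finset.Icc (p+1) n, Yreg G Ad X r ((t:ℤ)-1) ↑b ω)
              * (A (↑b : Fin p × Fin d).1 r (↑b : Fin p × Fin d).2 - what r n ω ↑b))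
            + ((((Finset.Icc (p+1) n).card : ℝ)) * (mE r - muhat r n ω)
              + ∑ t ∈ Finset.Icc (p+1) n, (ε (↑t) ω r - mE r)) := by
        calc ∑ t ∈ Finset.Icc (p+1) n,
            (X (↑t) ω r - (∑ ji : Fin p × Fin d,
              what r n ω ji * Yreg G Ad X r ((t:ℤ)-1) ji ω) - muhat r n ω)
            = ∑ t ∈ Finset.Icc (p+1) n,
              ((∑ b : ↥(S r), Yreg G Ad X r ((t:ℤ)-1) ↑b ω
                  * (A (↑b : Fin p × Fin d).1 r (↑b : Fin p × Fin d).2 - what r n ω ↑b))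
                + ((mE r - muhat r n ω) + (ε (↑t) ω r - mE r))) := by
              refine Finset.sum_congr rfl fun t ht => ?_
              rw [he t ht]
              congr 1
              exact Finset.sum_congr rfl fun b _ => by ring
          _ = _ := by
              rw [Finset.sum_add_distrib, Finset.sum_add_distrib, Finset.sum_comm]
              congr 1
              · exact Finset.sum_congr rfl fun b _ => by rw [← Finset.sum_mul]
              · congr 1
                rw [Finset.sum_const, nsmul_eq_mul]
      have key0 := key.symm.trans hFOC0
      show (SqrtAux.MnM p (S r) (Yreg G Ad X r) n ω *ᵥ _) (Sum.inr u) = _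
      simp only [SqrtAux.MnM, SqrtAux.bnV, Matrix.mulVec, dotProduct,
        Fintype.sum_sum_type, Matrix.fromBlocks_apply₂₁, Matrix.fromBlocks_apply₂₂,
        Matrix.of_apply, Sum.elim_inl, Sum.elim_inr, Finset.univ_unique,
        Finset.sum_singleton, Matrix.one_apply_eq]
      have hsum : ∑ b : ↥(S r), ((n:ℝ)⁻¹ * ∑ t ∈ Finset.Icc (p+1) n,
            Yreg G Ad X r ((t:ℤ)-1) ↑b ω)
            * (A (↑b : Fin p × Fin d).1 r (↑b : Fin p × Fin d).2 - what r n ω ↑b)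
          = (n:ℝ)⁻¹ * ∑ b : ↥(S r), (∑ t ∈ Finset.Icc (p+1) n,
            Yreg G Ad X r ((t:ℤ)-1) ↑b ω)
            * (A (↑b : Fin p × Fin d).1 r (↑b : Fin p × Fin d).2 - what r n ω ↑b) := by
        rw [Finset.mul_sum]
        exact Finset.sum_congr rfl fun b _ => by ring
      rw [hsum]
      linear_combination (n:ℝ)⁻¹ * key0
  -- invertibility of the population matrix
  have hMunit : IsUnit (SqrtAux.Mpop (S r)
      (fun a b => covR P (Yreg G Ad X r 1 a) (Yreg G Ad X r 1 b)) (μY r)) := by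
    exact SqrtAux.Mpop_isUnit _ _ _ (hΓinv r)
  -- measurability of the regressors
  have hYmeas : ∀ (s : ℤ) (ji : Fin p × Fin d), Measurable (fun ω => Yreg G Ad X r s ji ω) := by
    intro s ji
    have hm : Measurable (fun M : Matrix (Fin d) (Fin d) ℝ => M r ji.2) :=
      (measurable_pi_apply ji.2).comp (measurable_pi_apply r)
    have h1 : Measurable (fun ω => G ji.1 (Ad (s - (ji.1:ℕ)) ω) r ji.2) :=
      hm.comp ((hGmeas ji.1).comp (hAdmeas _))
    have h2 : Measurable (fun ω => X (s - (ji.1:ℕ)) ω ji.2) :=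
      (measurable_pi_apply ji.2).comp (hXmeas _)
    exact h1.mul h2
  -- the remainder matrix entries are O_P(1/√n)
  have hRbdd : ∀ i j, SqrtNBddInProb P (fun n ω =>
      (SqrtAux.MnM p (S r) (Yreg G Ad X r) n ω -
        SqrtAux.Mpop (S r) (fun a b => covR P (Yreg G Ad X r 1 a) (Yreg G Ad X r 1 b))
          (μY r)) i j) := by
    intro i j
    cases i with
    | inl a =>
      cases j with
      | inl b =>
        have P1 := SqrtAux.bdd_centered (P := P) (hsampleCov r ↑a ↑b)
        have P2 := SqrtAux.const_mul (P := P) (μY r ↑a) (SqrtAux.bdd_centered (hmeanY r ↑b))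
        have P3 := SqrtAux.const_mul (P := P) (μY r ↑b) (SqrtAux.bdd_centered (hmeanY r ↑a))
        have P4 := SqrtAux.div_n (P := P) (C := fun ω =>
          μY r ↑a * μY r ↑b - ∑ s ∈ Finset.Icc 1 (p-1),
            Yreg G Ad X r (s:ℤ) ↑a ω * Yreg G Ad X r (s:ℤ) ↑b ω)
          (by
            refine Measurable.sub measurable_const ?_
            exact Finset.measurable_sum _ (fun s _ => (hYmeas (s:ℤ) ↑a).mul (hYmeas (s:ℤ) ↑b)))
        refine SqrtAux.congr' (SqrtAux.add P1 (SqrtAux.add P2 (SqrtAux.add P3 P4))) ?_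
        filter_upwards [Filter.eventually_ge_atTop (max p 2)] with n hn ω
        have hpn : p ≤ n := le_trans (le_max_left _ _) hn
        have hn2 : 2 ≤ n := le_trans (le_max_right _ _) hn
        have hshift := SqrtAux.sum_shift
          (fun s => Yreg G Ad X r s ↑a ω * Yreg G Ad X r s ↑b ω) hp hpn
        simp only [Matrix.sub_apply, SqrtAux.MnM, SqrtAux.Mpop,
          Matrix.fromBlocks_apply₁₁, Matrix.of_apply]
        rw [hshift]
        have hexp : ∑ s ∈ Finset.Icc 1 (n-1),
            (Yreg G Ad X r (s:ℤ) ↑a ω - μY r ↑a) * (Yreg G Ad X r (s:ℤ) ↑b ω - μY r ↑b)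
            = (∑ s ∈ Finset.Icc 1 (n-1), Yreg G Ad X r (s:ℤ) ↑a ω * Yreg G Ad X r (s:ℤ) ↑b ω)
              - μY r ↑a * (∑ s ∈ Finset.Icc 1 (n-1), Yreg G Ad X r (s:ℤ) ↑b ω)
              - μY r ↑b * (∑ s ∈ Finset.Icc 1 (n-1), Yreg G Ad X r (s:ℤ) ↑a ω)
              + ((n-1:ℕ):ℝ) * (μY r ↑a * μY r ↑b) := by
          rw [Finset.mul_sum, Finset.mul_sum]
          rw [show ((n-1:ℕ):ℝ) * (μY r ↑a * μY r ↑b)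
              = ∑ _s ∈ Finset.Icc 1 (n-1), μY r ↑a * μY r ↑b by
            rw [Finset.sum_const, nsmul_eq_mul, Nat.card_Icc]
            norm_num]
          rw [← Finset.sum_sub_distrib, ← Finset.sum_sub_distrib, ← Finset.sum_add_distrib]
          exact Finset.sum_congr rfl fun s _ => by ring
        rw [hexp]
        have hcast : ((n-1:ℕ):ℝ) = (n:ℝ) - 1 := by
          have : (1:ℕ) ≤ n := by omega
          push_cast [this]
          ring
        rw [hcast]
        have hne : (n:ℝ) ≠ 0 := by positivity
        field_simp
        ring
      | inr u =>
        have Q1 := SqrtAux.bdd_centered (P := P) (hmeanY r ↑a)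
        have Q2 := SqrtAux.div_n (P := P) (C := fun ω =>
          -∑ s ∈ Finset.Icc 1 (p-1), Yreg G Ad X r (s:ℤ) ↑a ω)
          (by exact (Finset.measurable_sum _ (fun (s : ℕ) _ => hYmeas (s:ℤ) ↑a)).neg)
        refine SqrtAux.congr' (SqrtAux.add Q1 Q2) ?_
        filter_upwards [Filter.eventually_ge_atTop (max p 2)] with n hn ω
        have hpn : p ≤ n := le_trans (le_max_left _ _) hn
        have hshift := SqrtAux.sum_shift (fun s => Yreg G Ad X r s ↑a ω) hp hpn
        simp only [Matrix.sub_apply, SqrtAux.MnM, SqrtAux.Mpop,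
          Matrix.fromBlocks_apply₁₂, Matrix.of_apply]
        rw [hshift]
        have hne : (n:ℝ) ≠ 0 := by
          have : 2 ≤ n := le_trans (le_max_right _ _) hn
          positivity
        field_simp
        ring
    | inr u =>
      cases j with
      | inl b =>
        have Q1 := SqrtAux.bdd_centered (P := P) (hmeanY r ↑b)
        have Q2 := SqrtAux.div_n (P := P) (C := fun ω =>
          -∑ s ∈ Finset.Icc 1 (p-1), Yreg G Ad X r (s:ℤ) ↑b ω)
          (by exact (Finset.measurable_sum _ (fun (s : ℕ) _ => hYmeas (s:ℤ) ↑b)).neg)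
        refine SqrtAux.congr' (SqrtAux.add Q1 Q2) ?_
        filter_upwards [Filter.eventually_ge_atTop (max p 2)] with n hn ω
        have hpn : p ≤ n := le_trans (le_max_left _ _) hn
        have hshift := SqrtAux.sum_shift (fun s => Yreg G Ad X r s ↑b ω) hp hpn
        simp only [Matrix.sub_apply, SqrtAux.MnM, SqrtAux.Mpop,
          Matrix.fromBlocks_apply₂₁, Matrix.of_apply]
        rw [hshift]
        have hne : (n:ℝ) ≠ 0 := by
          have : 2 ≤ n := le_trans (le_max_right _ _) hn
          positivity
        field_simp
        ring
      | inr u' =>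
        have R1 := SqrtAux.div_n (P := P) (C := fun _ => -(p:ℝ)) measurable_const
        refine SqrtAux.congr' R1 ?_
        filter_upwards [Filter.eventually_ge_atTop (max p 2)] with n hn ω
        have hpn : p ≤ n := le_trans (le_max_left _ _) hn
        simp only [Matrix.sub_apply, SqrtAux.MnM, SqrtAux.Mpop,
          Matrix.fromBlocks_apply₂₂, Matrix.of_apply, Matrix.one_apply_eq]
        rw [Nat.card_Icc]
        have hcast : ((n + 1 - (p+1):ℕ):ℝ) = (n:ℝ) - (p:ℝ) := by
          rw [show n + 1 - (p+1) = n - p from by omega, Nat.cast_sub hpn]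
        rw [hcast]
        have hne : (n:ℝ) ≠ 0 := by
          have : 2 ≤ n := le_trans (le_max_right _ _) hn
          positivity
        field_simp
        try ring
  -- the cross terms are O_P(1/√n)
  have hbbdd : ∀ i, SqrtNBddInProb P (fun n ω =>
      SqrtAux.bnV p (S r) (Yreg G Ad X r) (fun t ω => ε t ω r - mE r) n ω i) := by
    have hεmeas : ∀ t : ℤ, Measurable (fun ω => ε t ω r) :=
      fun t => (measurable_pi_apply r).comp (hiid.1 t)
    intro i
    cases i with
    | inl a =>
      have hcc : SqrtNBddInProb P (fun n ω => (n:ℝ)⁻¹ * ∑ t ∈ Finset.Icc 1 n,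
          (Yreg G Ad X r (t:ℤ) ↑a ω - μY r ↑a) * (ε ((t:ℤ)+1) ω r - mE r) - 0) :=
        SqrtAux.congr' (hcrossCov r ↑a) (by filter_upwards with n ω; rw [sub_zero])
      have W1 := SqrtAux.neg (SqrtAux.bdd_centered (P := P) hcc)
      have W2 := SqrtAux.neg (SqrtAux.const_mul (P := P) (μY r ↑a) (hmeanEps r))
      have W3 := SqrtAux.div_n (P := P) (C := fun ω =>
          μY r ↑a * (ε 1 ω r - mE r) + ∑ s ∈ Finset.Icc 1 (p-1),
            Yreg G Ad X r (s:ℤ) ↑a ω * (ε ((s:ℤ)+1) ω r - mE r))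
        (by
          refine Measurable.add ?_ ?_
          · exact measurable_const.mul ((hεmeas 1).sub measurable_const)
          · exact Finset.measurable_sum _ (fun (s : ℕ) _ =>
              (hYmeas (s:ℤ) ↑a).mul (((hεmeas ((s:ℤ)+1))).sub measurable_const)))
      refine SqrtAux.congr' (SqrtAux.add W1 (SqrtAux.add W2 W3)) ?_
      filter_upwards [Filter.eventually_ge_atTop (max p 2)] with n hn ω
      have hpn : p ≤ n := le_trans (le_max_left _ _) hn
      have hn1 : 1 ≤ n := by omega
      simp only [SqrtAux.bnV, Sum.elim_inl]
      have hsummand : ∀ t ∈ Finset.Icc (p+1) n,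
          Yreg G Ad X r ((t:ℤ)-1) ↑a ω * (ε (t:ℤ) ω r - mE r)
          = (fun s : ℤ => Yreg G Ad X r s ↑a ω * (ε (s+1) ω r - mE r)) ((t:ℤ)-1) := by
        intro t _
        simp only
        rw [show (t:ℤ)-1+1 = (t:ℤ) from by ring]
      rw [Finset.sum_congr rfl hsummand,
        SqrtAux.sum_shift (fun s => Yreg G Ad X r s ↑a ω * (ε (s+1) ω r - mE r)) hp hpn]
      have hdec : ∑ s ∈ Finset.Icc 1 (n-1),
          Yreg G Ad X r (s:ℤ) ↑a ω * (ε ((s:ℤ)+1) ω r - mE r)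
          = (∑ s ∈ Finset.Icc 1 (n-1),
              (Yreg G Ad X r (s:ℤ) ↑a ω - μY r ↑a) * (ε ((s:ℤ)+1) ω r - mE r))
            + μY r ↑a * ∑ s ∈ Finset.Icc 1 (n-1), (ε ((s:ℤ)+1) ω r - mE r) := by
        rw [Finset.mul_sum, ← Finset.sum_add_distrib]
        exact Finset.sum_congr rfl fun s _ => by ring
      have hs2 := SqrtAux.sum_shift2 (fun u => ε u ω r - mE r) hn1
      have hsm : ∑ t ∈ Finset.Icc 1 n, (ε (t:ℤ) ω r - mE r)
          = (∑ t ∈ Finset.Icc 1 n, ε (t:ℤ) ω r) - (n:ℝ) * mE r := by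
        rw [Finset.sum_sub_distrib, Finset.sum_const, nsmul_eq_mul, Nat.card_Icc]
        norm_num
      rw [hdec, hs2, hsm]
      have hne : (n:ℝ) ≠ 0 := by positivity
      field_simp
      ring
    | inr u =>
      have V1 := SqrtAux.neg (hmeanEps r)
      have V2 := SqrtAux.div_n (P := P) (C := fun ω =>
          ∑ t ∈ Finset.Icc 1 p, (ε (t:ℤ) ω r - mE r))
        (by exact Finset.measurable_sum _ (fun (t : ℕ) _ =>
          (hεmeas (t:ℤ)).sub measurable_const))
      refine SqrtAux.congr' (SqrtAux.add V1 V2) ?_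
      filter_upwards [Filter.eventually_ge_atTop (max p 2)] with n hn ω
      have hpn : p ≤ n := le_trans (le_max_left _ _) hn
      have hn1 : 1 ≤ n := by omega
      simp only [SqrtAux.bnV, Sum.elim_inr]
      rw [SqrtAux.sum_split (fun u => ε u ω r - mE r) hpn]
      have hsm : ∑ t ∈ Finset.Icc 1 n, (ε (t:ℤ) ω r - mE r)
          = (∑ t ∈ Finset.Icc 1 n, ε (t:ℤ) ω r) - (n:ℝ) * mE r := by
        rw [Finset.sum_sub_distrib, Finset.sum_const, nsmul_eq_mul, Nat.card_Icc]
        norm_num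
      rw [hsm]
      have hne : (n:ℝ) ≠ 0 := by positivity
      field_simp
      ring
  -- solve the normal equations
  have main := SqrtAux.solve (P := P)
    (SqrtAux.Mpop (S r) (fun a b => covR P (Yreg G Ad X r 1 a) (Yreg G Ad X r 1 b)) (μY r))
    hMunit
    (fun n ω => SqrtAux.MnM p (S r) (Yreg G Ad X r) n ω -
      SqrtAux.Mpop (S r) (fun a b => covR P (Yreg G Ad X r 1 a) (Yreg G Ad X r 1 b)) (μY r))
    (SqrtAux.bnV p (S r) (Yreg G Ad X r) (fun t ω => ε t ω r - mE r))
    (fun n ω => Sum.elim (fun a : ↥(S r) => A (a : Fin p × Fin d).1 r (a : Fin p × Fin d).2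
        - what r n ω ↑a)
      (fun _ : Unit => mE r - muhat r n ω))
    (fun n ω => by
      have hadd : SqrtAux.Mpop (S r)
            (fun a b => covR P (Yreg G Ad X r 1 a) (Yreg G Ad X r 1 b)) (μY r) +
          (SqrtAux.MnM p (S r) (Yreg G Ad X r) n ω -
            SqrtAux.Mpop (S r) (fun a b => covR P (Yreg G Ad X r 1 a) (Yreg G Ad X r 1 b))
              (μY r)) = SqrtAux.MnM p (S r) (Yreg G Ad X r) n ω := by abel
      rw [hadd]
      exact hfoc n ω)
    hRbdd hbbdd
  constructor
  · refine SqrtAux.congr' (SqrtAux.neg (main (Sum.inr ()))) ?_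
    filter_upwards with n ω
    simp
  · intro ji hji
    refine SqrtAux.congr' (SqrtAux.neg (main (Sum.inl ⟨ji, hji⟩))) ?_
    filter_upwards with n ω
    simp
end
end

section
/- Let Ã ∈ ℝ^{m×m}, let j, s ≥ 1, and let M_1, …, M_s and M_1*, …, M_s* be random m×m matrices with all entries bounded by 1 in absolute value, with M_k = M_k* whenever k > j, and such that for every k, max_{i,l} ‖e_iᵀ(M_k − M_k*)e_l‖_{E,2q} ≤ δ_k. Then ‖e_rᵀ( ∏_{k=1}^s (Ã ⊙ M_k) − ∏_{k=1}^s (Ã ⊙ M_k*) )𝟙‖_{E,2q} ≤ √m · ‖|Ã|^s‖₂ · Σ_{k=1}^{min(j,s)} δ_k for every r = 1, …, m. (This is the key coupling bound on the moving-average coefficient matrices B_{j,s} used to prove q-stability of the NAR process.) -/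
noncomputable section
open MeasureTheory ProbabilityTheory Filter Matrix Topology

open scoped ENNReal

lemma pow_entry_nonneg {m : ℕ} {B : Matrix (Fin m) (Fin m) ℝ}
    (hB : ∀ i l, 0 ≤ B i l) (n : ℕ) : ∀ i l, 0 ≤ (B ^ n) i l := by
  induction n with
  | zero => intro i l; by_cases h : i = l <;> simp [pow_zero, Matrix.one_apply, h]
  | succ n ih =>
    intro i l
    rw [pow_succ, Matrix.mul_apply]
    exact Finset.sum_nonneg fun a _ => mul_nonneg (ih i a) (hB a l)

lemma abs_prodI_le {m : ℕ} {B : Matrix (Fin m) (Fin m) ℝ} {F : ℕ → Matrix (Fin m) (Fin m) ℝ}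
    (hB : ∀ i l, 0 ≤ B i l) (hF : ∀ k i l, |F k i l| ≤ B i l) (n : ℕ) :
    ∀ i l, |prodI F n i l| ≤ (B ^ n) i l := by
  induction n with
  | zero =>
    intro i l
    by_cases h : i = l <;> simp [prodI, pow_zero, Matrix.one_apply, h]
  | succ n ih =>
    intro i l
    show |(prodI F n * F (n+1)) i l| ≤ (B ^ (n+1)) i l
    rw [Matrix.mul_apply, pow_succ, Matrix.mul_apply]
    refine (Finset.abs_sum_le_sum_abs _ _).trans (Finset.sum_le_sum fun a _ => ?_)
    rw [abs_mul]
    exact mul_le_mul (ih i a) (hF (n+1) a l) (abs_nonneg _) (pow_entry_nonneg hB n i a)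

lemma prodI_sub {n : Type*} [Fintype n] [DecidableEq n] (F G : ℕ → Matrix n n ℝ) (s : ℕ) :
    prodI F s - prodI G s =
      ∑ k ∈ Finset.Icc 1 s, prodI F (k-1) * (F k - G k) * prodI (fun t => G (k+t)) (s-k) := by
  induction s with
  | zero => simp [prodI]
  | succ s ih =>
    have h1 : ∀ k ∈ Finset.Icc 1 s,
        prodI F (k-1) * (F k - G k) * prodI (fun t => G (k+t)) (s+1-k)
        = prodI F (k-1) * (F k - G k) * prodI (fun t => G (k+t)) (s-k) * G (s+1) := by
      intro k hk
      simp only [Finset.mem_Icc] at hk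
      have e1 : s + 1 - k = (s - k) + 1 := by omega
      have e2 : k + (s - k + 1) = s + 1 := by omega
      rw [e1]
      show _ * (prodI (fun t => G (k+t)) (s-k) * G (k + (s - k + 1))) = _
      rw [e2]; simp only [mul_assoc]
    rw [Finset.sum_Icc_succ_top (by omega : 1 ≤ s + 1), Finset.sum_congr rfl h1]
    simp only [Nat.add_sub_cancel, Nat.sub_self]
    rw [← Finset.sum_mul, ← ih]
    show prodI F s * F (s+1) - prodI G s * G (s+1) = _
    show _ = _ + prodI F s * (F (s+1) - G (s+1)) * prodI (fun t => G (s+1+t)) 0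
    show _ = _ + prodI F s * (F (s+1) - G (s+1)) * 1
    noncomm_ring

lemma measurable_mul_entry {m : ℕ} {Ω : Type*} [MeasurableSpace Ω]
    {X Y : Ω → Matrix (Fin m) (Fin m) ℝ}
    (hX : ∀ a b, Measurable fun ω => X ω a b) (hY : ∀ a b, Measurable fun ω => Y ω a b) :
    ∀ a b, Measurable fun ω => (X ω * Y ω) a b := by
  intro a b
  simp only [Matrix.mul_apply]
  exact Finset.measurable_sum _ fun c _ => (hX a c).mul (hY c b)

lemma measurable_prodI_entry {m : ℕ} {Ω : Type*} [MeasurableSpace Ω]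
    (F : ℕ → Ω → Matrix (Fin m) (Fin m) ℝ)
    (hF : ∀ k a b, Measurable fun ω => F k ω a b) (n : ℕ) :
    ∀ a b, Measurable fun ω => prodI (fun k => F k ω) n a b := by
  induction n with
  | zero => intro a b; simpa [prodI] using measurable_const
  | succ n ih =>
    exact measurable_mul_entry (X := fun ω => prodI (fun k => F k ω) n) ih (hF (n+1))

lemma Enorm_eq_toReal {Ω : Type*} [MeasurableSpace Ω] {P : Measure Ω} {p : ℝ} (hp : 0 < p)
    {W : Ω → ℝ} (hW : MemLp W (ENNReal.ofReal p) P) :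
    Enorm P p W = (eLpNorm W (ENNReal.ofReal p) P).toReal := by
  rw [hW.eLpNorm_eq_integral_rpow_norm (ENNReal.ofReal_pos.mpr hp).ne' ENNReal.ofReal_ne_top,
    ENNReal.toReal_ofReal (by positivity)]
  simp [Enorm, ENNReal.toReal_ofReal hp.le, Real.norm_eq_abs, one_div]

lemma Enorm_nonneg' {Ω : Type*} [MeasurableSpace Ω] (P : Measure Ω) (q : ℝ) (W : Ω → ℝ) :
    0 ≤ Enorm P q W := by
  apply Real.rpow_nonneg
  exact integral_nonneg fun ω => Real.rpow_nonneg (abs_nonneg _) _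

lemma row_sum_le_sqrt_sNorm {m : ℕ} (B : Matrix (Fin m) (Fin m) ℝ)
    (hB : ∀ i l, 0 ≤ B i l) (r : Fin m) :
    ∑ l, B r l ≤ Real.sqrt m * sNorm B := by
  set x : EuclideanSpace ℝ (Fin m) := (WithLp.equiv 2 _).symm (fun _ => (1 : ℝ)) with hx
  have hBx : Matrix.toEuclideanCLM (𝕜 := ℝ) B x = (WithLp.equiv 2 _).symm (B *ᵥ fun _ => 1) :=
    Matrix.toEuclideanCLM_toLp B _
  have h1 : ∑ l, B r l = (B *ᵥ fun _ => (1:ℝ)) r := by simp [Matrix.mulVec, dotProduct]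
  have h2 : |(B *ᵥ fun _ => (1:ℝ)) r| ≤ ‖Matrix.toEuclideanCLM (𝕜 := ℝ) B x‖ := by
    rw [hBx]
    rw [EuclideanSpace.norm_eq]
    simp only [WithLp.equiv_symm_apply, WithLp.ofLp_toLp, PiLp.toLp_apply, Real.norm_eq_abs, sq_abs]
    set v := B *ᵥ fun _ => (1:ℝ)
    have h5 : |v r| = Real.sqrt (v r ^ 2) := by rw [Real.sqrt_sq_eq_abs]
    rw [h5]
    exact Real.sqrt_le_sqrt (Finset.single_le_sum (f := fun i => v i ^ 2)
      (fun i _ => sq_nonneg _) (Finset.mem_univ r))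
  have h3 : ‖Matrix.toEuclideanCLM (𝕜 := ℝ) B x‖ ≤ sNorm B * ‖x‖ :=
    (Matrix.toEuclideanCLM (𝕜 := ℝ) B).le_opNorm x
  have h4 : ‖x‖ = Real.sqrt m := by
    rw [EuclideanSpace.norm_eq]
    simp only [hx, WithLp.equiv_symm_apply, WithLp.ofLp_toLp, PiLp.toLp_apply, Real.norm_eq_abs, abs_one, one_pow,
      Finset.sum_const, Finset.card_univ, Fintype.card_fin, nsmul_eq_mul, mul_one]
  calc ∑ l, B r l = |(B *ᵥ fun _ => (1:ℝ)) r| := by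
        rw [h1, abs_of_nonneg]
        rw [← h1]; exact Finset.sum_nonneg fun l _ => hB r l
    _ ≤ sNorm B * ‖x‖ := h2.trans h3
    _ = Real.sqrt m * sNorm B := by rw [h4, mul_comm]

lemma sum_row_mul {m : ℕ} (U V : Matrix (Fin m) (Fin m) ℝ) (i : Fin m) :
    ∑ l, (U * V) i l = ∑ a, U i a * ∑ l, V a l := by
  simp only [Matrix.mul_apply]
  rw [Finset.sum_comm]
  simp only [← Finset.mul_sum]

lemma sum_triple_prod {m : ℕ} (X Y Z : Matrix (Fin m) (Fin m) ℝ) (r : Fin m) :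
    ∑ l, (X * Y * Z) r l
      = ∑ ab : Fin m × Fin m, X r ab.1 * Y ab.1 ab.2 * (∑ l, Z ab.2 l) := by
  rw [Fintype.sum_prod_type]
  rw [sum_row_mul (X*Y) Z r]
  simp only [Matrix.mul_apply, Finset.sum_mul]
  exact Finset.sum_comm


/-- key coupling bound: if `M_1, …, M_s` and `M_1*, …, M_s*` are
random matrices with entries in `[−1,1]`, agreeing for indices `k > j`, and whose
entrywise coupling distances in `‖·‖_{E,2q}` are bounded by `δ_k`, then
`‖e_rᵀ(∏_{k=1}^s (Ã ⊙ M_k) − ∏_{k=1}^s (Ã ⊙ M_k*))𝟙‖_{E,2q}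
  ≤ √m ‖|Ã|^s‖₂ Σ_{k=1}^{min(j,s)} δ_k`. -/
theorem stmt14 {m : ℕ}
    {Ω : Type*} [MeasurableSpace Ω] (P : Measure Ω) [IsProbabilityMeasure P]
    (Atil : Matrix (Fin m) (Fin m) ℝ)
    (j s : ℕ) (hj : 1 ≤ j) (hs : 1 ≤ s)
    (M Mstar : ℕ → Ω → Matrix (Fin m) (Fin m) ℝ)
    (δ : ℕ → ℝ) (q : ℝ) (hq : 1 ≤ q)
    (hMmeas : ∀ k, Measurable (M k)) (hMstarmeas : ∀ k, Measurable (Mstar k))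
    -- all entries bounded by 1 in absolute value
    (hMbd : ∀ k ω i l, |M k ω i l| ≤ 1)
    (hMstarbd : ∀ k ω i l, |Mstar k ω i l| ≤ 1)
    -- `M_k = M_k*` whenever `k > j`
    (heq : ∀ k, j < k → ∀ ω, M k ω = Mstar k ω)
    -- entrywise coupling distances bounded by `δ_k`
    (hδ : ∀ k i l, Enorm P (2 * q) (fun ω => M k ω i l - Mstar k ω i l) ≤ δ k) :
    ∀ r : Fin m,
      Enorm P (2 * q) (fun ω => ∑ l : Fin m,
          (prodI (fun k => Atil.hadamard (M k ω)) s -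
           prodI (fun k => Atil.hadamard (Mstar k ω)) s) r l) ≤
        Real.sqrt m * sNorm (entrywiseAbs Atil ^ s) *
          ∑ k ∈ Finset.Icc 1 (min j s), δ k := by
  intro r
  have hm : 0 < m := r.pos
  set B := entrywiseAbs Atil with hBdef
  have hBnn : ∀ i l, 0 ≤ B i l := fun i l => abs_nonneg _
  have hq0 : (0:ℝ) < 2*q := by linarith
  set p' : ℝ≥0∞ := ENNReal.ofReal (2*q) with hp'
  have hp1 : (1:ℝ≥0∞) ≤ p' := by
    rw [hp', ENNReal.one_le_ofReal]; linarith
  -- entry measurability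
  have hMent : ∀ k a b, Measurable fun ω => M k ω a b := fun k a b =>
    (measurable_pi_apply b).comp ((measurable_pi_apply a).comp (hMmeas k))
  have hMstarent : ∀ k a b, Measurable fun ω => Mstar k ω a b := fun k a b =>
    (measurable_pi_apply b).comp ((measurable_pi_apply a).comp (hMstarmeas k))
  set F : ℕ → Ω → Matrix (Fin m) (Fin m) ℝ := fun k ω => Atil.hadamard (M k ω) with hF
  set G : ℕ → Ω → Matrix (Fin m) (Fin m) ℝ := fun k ω => Atil.hadamard (Mstar k ω) with hG
  have hFent : ∀ k a b, Measurable fun ω => F k ω a b := fun k a b =>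
    measurable_const.mul (hMent k a b)
  have hGent : ∀ k a b, Measurable fun ω => G k ω a b := fun k a b =>
    measurable_const.mul (hMstarent k a b)
  have hFbd : ∀ (ω : Ω) k a b, |F k ω a b| ≤ B a b := by
    intro ω k a b
    show |Atil a b * M k ω a b| ≤ |Atil a b|
    rw [abs_mul]
    exact mul_le_of_le_one_right (abs_nonneg _) (hMbd k ω a b)
  have hGbd : ∀ (ω : Ω) k a b, |G k ω a b| ≤ B a b := by
    intro ω k a b
    show |Atil a b * Mstar k ω a b| ≤ |Atil a b|
    rw [abs_mul]
    exact mul_le_of_le_one_right (abs_nonneg _) (hMstarbd k ω a b)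
  -- δ nonneg
  have hδ0 : ∀ k, 0 ≤ δ k := fun k =>
    (Enorm_nonneg' P (2*q) _).trans (hδ k ⟨0, hm⟩ ⟨0, hm⟩)
  -- MemLp and eLpNorm bound for the entrywise differences
  have hΔmem : ∀ k a b, MemLp (fun ω => M k ω a b - Mstar k ω a b) p' P := by
    intro k a b
    refine MemLp.of_bound ((hMent k a b).sub (hMstarent k a b)).aestronglyMeasurable 2
      (ae_of_all _ fun ω => ?_)
    rw [Real.norm_eq_abs]
    calc |M k ω a b - Mstar k ω a b| ≤ |M k ω a b| + |Mstar k ω a b| := abs_sub _ _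
      _ ≤ 1 + 1 := add_le_add (hMbd k ω a b) (hMstarbd k ω a b)
      _ = 2 := by norm_num
  have hΔle : ∀ k a b,
      eLpNorm (fun ω => M k ω a b - Mstar k ω a b) p' P ≤ ENNReal.ofReal (δ k) := by
    intro k a b
    rw [← ENNReal.ofReal_toReal (hΔmem k a b).eLpNorm_ne_top]
    exact ENNReal.ofReal_le_ofReal ((Enorm_eq_toReal hq0 (hΔmem k a b)) ▸ hδ k a b)
  -- the summand functions
  set Wk : ℕ → Ω → ℝ := fun k ω => ∑ l, (prodI (fun t => F t ω) (k-1) * (F k ω - G k ω) *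
    prodI (fun t => G (k+t) ω) (s-k)) r l with hWk
  set W : Ω → ℝ := fun ω => ∑ l,
      (prodI (fun t => F t ω) s - prodI (fun t => G t ω) s) r l with hW
  -- telescoping, and vanishing for k > j
  have hWsum : W = fun ω => ∑ k ∈ Finset.Icc 1 (min j s), Wk k ω := by
    funext ω
    show ∑ l, (prodI (fun t => F t ω) s - prodI (fun t => G t ω) s) r l = _
    rw [prodI_sub]
    have e1 : ∑ l, (∑ k ∈ Finset.Icc 1 s, prodI (fun t => F t ω) (k-1) * (F k ω - G k ω) *
        prodI (fun t => G (k+t) ω) (s-k)) r l = ∑ k ∈ Finset.Icc 1 s, Wk k ω := by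
      simp only [Matrix.sum_apply]
      rw [Finset.sum_comm]
    rw [e1]
    refine (Finset.sum_subset (Finset.Icc_subset_Icc_right (min_le_right j s)) ?_).symm
    intro k hk hk'
    simp only [Finset.mem_Icc] at hk hk'
    have hkj : j < k := by omega
    have : F k ω - G k ω = 0 := by
      show Atil ⊙ M k ω - Atil ⊙ Mstar k ω = 0
      rw [heq k hkj ω, sub_self]
    show ∑ l, (prodI (fun t => F t ω) (k-1) * (F k ω - G k ω) *
      prodI (fun t => G (k+t) ω) (s-k)) r l = 0
    rw [this]
    simp
  -- measurability of Wk
  have hWkmeas : ∀ k, Measurable (Wk k) := by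
    intro k
    apply Finset.measurable_sum
    intro l _
    exact measurable_mul_entry (measurable_mul_entry
      (measurable_prodI_entry F hFent (k-1))
      (fun a b => (hFent k a b).sub (hGent k a b)))
      (measurable_prodI_entry (fun t => G (k+t)) (fun t => hGent (k+t)) (s-k)) r l
  -- per-term bound
  have hterm : ∀ k ∈ Finset.Icc 1 (min j s),
      eLpNorm (Wk k) p' P ≤ ENNReal.ofReal ((∑ l, (B^s) r l) * δ k) := by
    intro k hk
    simp only [Finset.mem_Icc] at hk
    obtain ⟨hk1, hk2⟩ := hk
    have hks : k ≤ s := le_trans hk2 (min_le_right j s)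
    set c : Fin m × Fin m → ℝ := fun ab =>
      (B^(k-1)) r ab.1 * B ab.1 ab.2 * (∑ l, (B^(s-k)) ab.2 l) with hc
    have hcnn : ∀ ab, 0 ≤ c ab := by
      intro ab
      exact mul_nonneg (mul_nonneg (pow_entry_nonneg hBnn _ _ _) (hBnn _ _))
        (Finset.sum_nonneg fun l _ => pow_entry_nonneg hBnn _ _ _)
    have hcsum : ∑ ab : Fin m × Fin m, c ab = ∑ l, (B^s) r l := by
      have he : k - 1 + 1 + (s - k) = s := by omega
      have hpow : B^(k-1) * B * B^(s-k) = B^s := by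
        rw [← pow_succ, ← pow_add, he]
      rw [hc, ← sum_triple_prod, hpow]
    -- pointwise bound
    have hptw : ∀ ω, |Wk k ω| ≤ ∑ ab : Fin m × Fin m,
        c ab * |M k ω ab.1 ab.2 - Mstar k ω ab.1 ab.2| := by
      intro ω
      rw [hWk]
      show |∑ l, (prodI (fun t => F t ω) (k-1) * (F k ω - G k ω) *
        prodI (fun t => G (k+t) ω) (s-k)) r l| ≤ _
      rw [sum_triple_prod]
      refine (Finset.abs_sum_le_sum_abs _ _).trans (Finset.sum_le_sum fun ab _ => ?_)
      rw [abs_mul, abs_mul]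
      have hD : |(F k ω - G k ω) ab.1 ab.2|
          = B ab.1 ab.2 * |M k ω ab.1 ab.2 - Mstar k ω ab.1 ab.2| := by
        show |Atil ab.1 ab.2 * M k ω ab.1 ab.2 - Atil ab.1 ab.2 * Mstar k ω ab.1 ab.2| = _
        rw [← mul_sub, abs_mul]
        rfl
      rw [hD, hc]
      have h1 : |prodI (fun t => F t ω) (k-1) r ab.1| ≤ (B^(k-1)) r ab.1 :=
        abs_prodI_le hBnn (fun t => hFbd ω t) (k-1) r ab.1
      have h3 : |∑ l, prodI (fun t => G (k+t) ω) (s-k) ab.2 l| ≤ ∑ l, (B^(s-k)) ab.2 l :=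
        (Finset.abs_sum_le_sum_abs _ _).trans (Finset.sum_le_sum fun l _ =>
          abs_prodI_le hBnn (fun t => hGbd ω (k+t)) (s-k) ab.2 l)
      calc |prodI (fun t => F t ω) (k-1) r ab.1| *
            (B ab.1 ab.2 * |M k ω ab.1 ab.2 - Mstar k ω ab.1 ab.2|) *
            |∑ l, prodI (fun t => G (k+t) ω) (s-k) ab.2 l|
          ≤ (B^(k-1)) r ab.1 * (B ab.1 ab.2 * |M k ω ab.1 ab.2 - Mstar k ω ab.1 ab.2|) *
            (∑ l, (B^(s-k)) ab.2 l) := by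
            refine mul_le_mul (mul_le_mul h1 le_rfl
              (mul_nonneg (hBnn _ _) (abs_nonneg _)) (pow_entry_nonneg hBnn _ _ _)) h3
              (abs_nonneg _) ?_
            exact mul_nonneg (pow_entry_nonneg hBnn _ _ _)
              (mul_nonneg (hBnn _ _) (abs_nonneg _))
        _ = (B^(k-1)) r ab.1 * B ab.1 ab.2 * (∑ l, (B^(s-k)) ab.2 l) *
            |M k ω ab.1 ab.2 - Mstar k ω ab.1 ab.2| := by ring
    -- eLpNorm chain
    calc eLpNorm (Wk k) p' P
        ≤ eLpNorm (fun ω => ∑ ab : Fin m × Fin m,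
            c ab * |M k ω ab.1 ab.2 - Mstar k ω ab.1 ab.2|) p' P := by
          refine eLpNorm_mono_real fun ω => ?_
          rw [Real.norm_eq_abs]
          exact hptw ω
      _ = eLpNorm (∑ ab : Fin m × Fin m, fun ω =>
            c ab * |M k ω ab.1 ab.2 - Mstar k ω ab.1 ab.2|) p' P := by
          congr 1
          funext ω
          simp [Finset.sum_apply]
      _ ≤ ∑ ab : Fin m × Fin m, eLpNorm (fun ω =>
            c ab * |M k ω ab.1 ab.2 - Mstar k ω ab.1 ab.2|) p' P := by
          refine eLpNorm_sum_le (fun ab _ => ?_) hp1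
          exact (measurable_const.mul ((hMent k ab.1 ab.2).sub
            (hMstarent k ab.1 ab.2)).abs).aestronglyMeasurable
      _ ≤ ∑ ab : Fin m × Fin m, ENNReal.ofReal (c ab * δ k) := by
          refine Finset.sum_le_sum fun ab _ => ?_
          have e2 : (fun ω => c ab * |M k ω ab.1 ab.2 - Mstar k ω ab.1 ab.2|)
              = (c ab) • (fun ω => ‖M k ω ab.1 ab.2 - Mstar k ω ab.1 ab.2‖) := by
            funext ω; simp [Real.norm_eq_abs]
          rw [e2, eLpNorm_const_smul, eLpNorm_norm]
          rw [Real.enorm_eq_ofReal (hcnn ab), ENNReal.ofReal_mul (hcnn ab)]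
          exact mul_le_mul_right (hΔle k ab.1 ab.2) _
      _ = ENNReal.ofReal (∑ ab : Fin m × Fin m, c ab * δ k) :=
          (ENNReal.ofReal_sum_of_nonneg fun ab _ => mul_nonneg (hcnn ab) (hδ0 k)).symm
      _ = ENNReal.ofReal ((∑ l, (B^s) r l) * δ k) := by
          rw [← Finset.sum_mul, hcsum]
  -- assemble
  have hWmem : MemLp W p' P := by
    refine MemLp.of_bound ?_ (2 * ∑ l, (B^s) r l) (ae_of_all _ fun ω => ?_)
    · refine (Finset.measurable_sum _ fun l _ => ?_).aestronglyMeasurable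
      exact ((measurable_prodI_entry F hFent s r l).sub
        (measurable_prodI_entry G hGent s r l))
    · rw [Real.norm_eq_abs, hW]
      calc |∑ l, (prodI (fun t => F t ω) s - prodI (fun t => G t ω) s) r l|
          ≤ ∑ l, |(prodI (fun t => F t ω) s - prodI (fun t => G t ω) s) r l| :=
            Finset.abs_sum_le_sum_abs _ _
        _ ≤ ∑ l, ((B^s) r l + (B^s) r l) := by
            refine Finset.sum_le_sum fun l _ => ?_
            show |(prodI (fun t => F t ω) s) r l - (prodI (fun t => G t ω) s) r l| ≤ _
            exact (abs_sub _ _).trans (add_le_add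
              (abs_prodI_le hBnn (fun t => hFbd ω t) s r l)
              (abs_prodI_le hBnn (fun t => hGbd ω t) s r l))
        _ = 2 * ∑ l, (B^s) r l := by rw [Finset.sum_add_distrib]; ring
  have hWle : eLpNorm W p' P ≤
      ENNReal.ofReal (Real.sqrt m * sNorm (B^s) * ∑ k ∈ Finset.Icc 1 (min j s), δ k) := by
    calc eLpNorm W p' P
        = eLpNorm (∑ k ∈ Finset.Icc 1 (min j s), Wk k) p' P := by
          congr 1
          rw [hWsum]; funext ω; simp [Finset.sum_apply]
      _ ≤ ∑ k ∈ Finset.Icc 1 (min j s), eLpNorm (Wk k) p' P :=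
          eLpNorm_sum_le (fun k _ => (hWkmeas k).aestronglyMeasurable) hp1
      _ ≤ ∑ k ∈ Finset.Icc 1 (min j s), ENNReal.ofReal ((∑ l, (B^s) r l) * δ k) :=
          Finset.sum_le_sum hterm
      _ = ENNReal.ofReal (∑ k ∈ Finset.Icc 1 (min j s), (∑ l, (B^s) r l) * δ k) :=
          (ENNReal.ofReal_sum_of_nonneg fun k _ => mul_nonneg
            (Finset.sum_nonneg fun l _ => pow_entry_nonneg hBnn _ _ _) (hδ0 k)).symm
      _ ≤ ENNReal.ofReal (Real.sqrt m * sNorm (B^s) * ∑ k ∈ Finset.Icc 1 (min j s), δ k) := by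
          refine ENNReal.ofReal_le_ofReal ?_
          rw [← Finset.mul_sum]
          exact mul_le_mul_of_nonneg_right
            (row_sum_le_sqrt_sNorm (B^s) (pow_entry_nonneg hBnn s) r)
            (Finset.sum_nonneg fun k _ => hδ0 k)
  have hgoal : Enorm P (2*q) W ≤
      Real.sqrt m * sNorm (B^s) * ∑ k ∈ Finset.Icc 1 (min j s), δ k := by
    rw [Enorm_eq_toReal hq0 hWmem]
    refine ENNReal.toReal_le_of_le_ofReal ?_ hWle
    refine mul_nonneg (mul_nonneg (Real.sqrt_nonneg _) (norm_nonneg _))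
      (Finset.sum_nonneg fun k _ => hδ0 k)
  exact hgoal
end
end
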